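/- arXiv:1508.07663 — 7 statements merged into one kernel-verified Lean document; each statement's English description precedes it below -/
import Mathlib

section
/- The commutator subgroup of GL₂(ℤ/4ℤ) has index 2 in SL₂(ℤ/4ℤ). -/
open Matrix
open scoped commutatorElement

namespace Comm4Aux

abbrev G := GL (Fin 2) (ZMod 4)
abbrev G₂ := GL (Fin 2) (ZMod 2)

def r : ZMod 4 →+* ZMod 2 := ZMod.castHom (show 2 ∣ 4 by norm_num) (ZMod 2)

def π : G →* G₂ := Units.map (RingHom.mapMatrix (m := Fin 2) r).toMonoidHom

lemma π_val (x : G) : (π x).val = x.val.map r := rfl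

def t₂ : G₂ := ⟨!![0,1;1,1], !![1,1;1,0], by decide, by decide⟩

def A3 : Subgroup G₂ := Subgroup.zpowers t₂

lemma t₂_cube : t₂ ^ 3 = 1 := by decide

lemma mem_A3_pow3 {x : G₂} (h : x ∈ A3) : x ^ 3 = 1 := by
  obtain ⟨n, rfl⟩ := Subgroup.mem_zpowers_iff.mp h
  rw [← zpow_natCast, ← _root_.zpow_mul, mul_comm, _root_.zpow_mul, zpow_natCast, t₂_cube, _root_.one_zpow]

lemma pow3_mem_A3 {x : G₂} (h : x ^ 3 = 1) : x ∈ A3 := by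
  have key : ∀ y : G₂, y ^ 3 = 1 → y = 1 ∨ y = t₂ ∨ y = t₂ ^ 2 := by decide
  rcases key x h with rfl | rfl | rfl
  · exact one_mem _
  · exact Subgroup.mem_zpowers _
  · exact pow_mem (Subgroup.mem_zpowers _) 2

lemma comm_cube : ∀ u v : G₂, ⁅u,v⁆ ^ 3 = 1 := by decide

instance : A3.Normal := by
  constructor
  intro h hm g
  refine pow3_mem_A3 ?_
  rw [conj_pow, mem_A3_pow3 hm, mul_one, mul_inv_cancel]

def K : Subgroup G := (Matrix.GeneralLinearGroup.det (n := Fin 2) (R := ZMod 4)).ker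

def t : G := ⟨!![0,1;3,3], !![3,3;1,0], by decide, by decide⟩
def a0 : G := ⟨!![0,1;1,0], !![0,1;1,0], by decide, by decide⟩

lemma t_mem : t ∈ commutator G := by
  have : t = ⁅a0, t⁆ := Units.ext (by decide)
  rw [this, commutator_def]
  exact Subgroup.commutator_mem_commutator (Subgroup.mem_top _) (Subgroup.mem_top _)

lemma πt : π t = t₂ := Units.ext (by decide)

lemma det_t : Matrix.GeneralLinearGroup.det t = 1 := Units.ext (by decide)

-- the eight matrices ≡ 1 mod 2 with determinant 1
def u1 : G := ⟨!![1,0;0,1], !![1,0;0,1], by decide, by decide⟩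
def u2 : G := ⟨!![3,0;0,3], !![3,0;0,3], by decide, by decide⟩
def u3 : G := ⟨!![1,2;0,1], !![1,2;0,1], by decide, by decide⟩
def u4 : G := ⟨!![1,0;2,1], !![1,0;2,1], by decide, by decide⟩
def u5 : G := ⟨!![1,2;2,1], !![1,2;2,1], by decide, by decide⟩
def u6 : G := ⟨!![3,2;0,3], !![3,2;0,3], by decide, by decide⟩
def u7 : G := ⟨!![3,0;2,3], !![3,0;2,3], by decide, by decide⟩
def u8 : G := ⟨!![3,2;2,3], !![3,2;2,3], by decide, by decide⟩

def w2a : G := ⟨!![0,1;3,0], !![0,3;1,0], by decide, by decide⟩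
def w3a : G := ⟨!![1,0;0,3], !![1,0;0,3], by decide, by decide⟩
def w3b : G := ⟨!![1,1;0,1], !![1,3;0,1], by decide, by decide⟩
def w4b : G := ⟨!![1,0;1,1], !![1,0;3,1], by decide, by decide⟩
def w5b : G := ⟨!![0,1;1,2], !![2,1;1,0], by decide, by decide⟩
def w6a : G := ⟨!![0,1;1,1], !![3,1;1,0], by decide, by decide⟩
def w6b : G := ⟨!![0,1;1,3], !![1,1;1,0], by decide, by decide⟩
def w8b : G := ⟨!![0,1;3,2], !![2,3;1,0], by decide, by decide⟩

lemma comm_mem (a b : G) : ⁅a, b⁆ ∈ commutator G := by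
  rw [commutator_def]
  exact Subgroup.commutator_mem_commutator (Subgroup.mem_top _) (Subgroup.mem_top _)

lemma u_mem : u1 ∈ commutator G ∧ u2 ∈ commutator G ∧ u3 ∈ commutator G ∧
    u4 ∈ commutator G ∧ u5 ∈ commutator G ∧ u6 ∈ commutator G ∧
    u7 ∈ commutator G ∧ u8 ∈ commutator G := by
  refine ⟨?_, ?_, ?_, ?_, ?_, ?_, ?_, ?_⟩
  · have : u1 = 1 := Units.ext (by decide)
    rw [this]; exact one_mem _
  · have : u2 = ⁅a0, w2a⁆ := Units.ext (by decide)
    rw [this]; exact comm_mem _ _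
  · have : u3 = ⁅w3a, w3b⁆ := Units.ext (by decide)
    rw [this]; exact comm_mem _ _
  · have : u4 = ⁅w3a, w4b⁆ := Units.ext (by decide)
    rw [this]; exact comm_mem _ _
  · have : u5 = ⁅a0, w5b⁆ := Units.ext (by decide)
    rw [this]; exact comm_mem _ _
  · have : u6 = ⁅w6a, w6b⁆ := Units.ext (by decide)
    rw [this]; exact comm_mem _ _
  · have : u7 = ⁅w6a, t⁆ := Units.ext (by decide)
    rw [this]; exact comm_mem _ _
  · have : u8 = ⁅a0, w8b⁆ := Units.ext (by decide)
    rw [this]; exact comm_mem _ _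

set_option maxRecDepth 20000 in
lemma key8 : ∀ A : Matrix (Fin 2) (Fin 2) (ZMod 4), A.map r = 1 → A.det = 1 →
    A = u1.val ∨ A = u2.val ∨ A = u3.val ∨ A = u4.val ∨ A = u5.val ∨ A = u6.val ∨
    A = u7.val ∨ A = u8.val := by decide

lemma commutator_eq : commutator G = K ⊓ Subgroup.comap π A3 := by
  apply le_antisymm
  · rw [commutator_def]
    rw [Subgroup.commutator_le]
    intro a _ b _
    refine ⟨?_, ?_⟩
    · show Matrix.GeneralLinearGroup.det ⁅a, b⁆ = 1
      rw [map_commutatorElement]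
      exact commutatorElement_eq_one_iff_commute.mpr (Commute.all _ _)
    · show π ⁅a, b⁆ ∈ A3
      rw [map_commutatorElement]
      exact pow3_mem_A3 (comm_cube _ _)
  · rintro x ⟨hx1, hx2⟩
    obtain ⟨n, hn⟩ := Subgroup.mem_zpowers_iff.mp hx2
    set y : G := x * t ^ (-n) with hy
    have hπy : π y = 1 := by
      rw [hy, _root_.map_mul, map_zpow, πt, ← hn, ← _root_.zpow_add, add_neg_cancel, zpow_zero]
    have hdy : Matrix.GeneralLinearGroup.det y = 1 := by
      rw [hy, _root_.map_mul, map_zpow, det_t, _root_.one_zpow, hx1, mul_one]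
    have hmap : y.val.map r = 1 := by
      have := congrArg Units.val hπy
      rwa [π_val] at this
    have hdet : y.val.det = 1 := by
      have := congrArg Units.val hdy
      simpa [Matrix.GeneralLinearGroup.val_det_apply] using this
    have hym : y ∈ commutator G := by
      obtain ⟨m1,m2,m3,m4,m5,m6,m7,m8⟩ := u_mem
      rcases key8 y.val hmap hdet with h|h|h|h|h|h|h|h <;>
        [ (have : y = u1 := Units.ext h); (have : y = u2 := Units.ext h);
          (have : y = u3 := Units.ext h); (have : y = u4 := Units.ext h);
          (have : y = u5 := Units.ext h); (have : y = u6 := Units.ext h);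
          (have : y = u7 := Units.ext h); (have : y = u8 := Units.ext h)] <;>
        rw [this] <;> assumption
    have hx : x = y * t ^ n := by
      rw [hy, mul_assoc, ← _root_.zpow_add, neg_add_cancel, zpow_zero, mul_one]
    rw [hx]
    exact mul_mem hym (Subgroup.zpow_mem _ t_mem n)

lemma card_G₂ : Nat.card G₂ = 6 := by
  rw [Nat.card_eq_fintype_card]
  decide

lemma card_A3 : Nat.card A3 = 3 := by
  rw [A3, Nat.card_zpowers]
  exact orderOf_eq_prime t₂_cube (by decide)

lemma index_A3 : A3.index = 2 := by
  have h := Subgroup.index_mul_card A3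
  rw [card_A3, card_G₂] at h
  omega

def s : G := ⟨!![0,1;3,0], !![0,3;1,0], by decide, by decide⟩

lemma s_mem_K : s ∈ K := Units.ext (by decide)

lemma πs_not_mem : π s ∉ A3 := by
  intro h
  have h3 := mem_A3_pow3 h
  have : π s = ⟨!![0,1;1,0], !![0,1;1,0], by decide, by decide⟩ := Units.ext (by decide)
  rw [this] at h3
  exact absurd h3 (by decide)

end Comm4Aux

open Comm4Aux in
/-- the commutator subgroup of `GL₂(ℤ/4ℤ)` has index 2 in
`SL₂(ℤ/4ℤ)` (the kernel of the determinant). -/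
theorem commutator_GL2_ZMod4_index_two :
    (commutator (GL (Fin 2) (ZMod 4))).relIndex
      (Matrix.GeneralLinearGroup.det (n := Fin 2) (R := ZMod 4)).ker = 2 := by
  rw [show (Matrix.GeneralLinearGroup.det (n := Fin 2) (R := ZMod 4)).ker = K from rfl]
  rw [commutator_eq, Subgroup.relIndex, Subgroup.inf_subgroupOf_left]
  have hker : (Subgroup.comap π A3).subgroupOf K =
      ((QuotientGroup.mk' A3).comp (π.comp K.subtype)).ker := by
    rw [← MonoidHom.comap_ker, QuotientGroup.ker_mk', ← Subgroup.comap_comap]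
    rfl
  rw [hker, Subgroup.index_ker]
  set ψ : ↥K →* G₂ ⧸ A3 := (QuotientGroup.mk' A3).comp (π.comp K.subtype) with hψ
  have hQ : Nat.card (G₂ ⧸ A3) = 2 := index_A3
  have hdvd : Nat.card ψ.range ≤ 2 := by
    have h := Subgroup.card_subgroup_dvd_card ψ.range
    rw [hQ] at h
    exact Nat.le_of_dvd (by norm_num) h
  have hne : Nat.card ψ.range ≠ 1 := by
    intro h1
    have hbot : ψ.range = ⊥ := Subgroup.eq_bot_of_card_eq _ h1
    have hs1 : ψ ⟨s, s_mem_K⟩ = 1 := by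
      have hm : ψ ⟨s, s_mem_K⟩ ∈ ψ.range := ⟨_, rfl⟩
      rw [hbot, Subgroup.mem_bot] at hm
      exact hm
    have : π s ∈ A3 := by
      rwa [hψ, MonoidHom.comp_apply, MonoidHom.comp_apply, QuotientGroup.mk'_apply,
        QuotientGroup.eq_one_iff] at hs1
    exact πs_not_mem this
  have hpos : Nat.card ψ.range ≠ 0 := Nat.card_pos.ne'
  omega
end

section
/- The commutator subgroup of GL₂(ℤ₃) (closed commutator subgroup of the profinite group) equals SL₂(ℤ₃), and the commutator subgroup of GL₂(ℤ₂) has index 2 in SL₂(ℤ₂). -/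
open Matrix
open scoped commutatorElement
section Alg
variable {R : Type*} [CommRing R]

/-- upper elementary matrix -/
def Eu (x : R) : GL (Fin 2) R :=
  ⟨!![1, x; 0, 1], !![1, -x; 0, 1],
   by simp [Matrix.mul_fin_two, Matrix.one_fin_two],
   by simp [Matrix.mul_fin_two, Matrix.one_fin_two]⟩

/-- lower elementary matrix -/
def Fu (x : R) : GL (Fin 2) R :=
  ⟨!![1, 0; x, 1], !![1, 0; -x, 1],
   by simp [Matrix.mul_fin_two, Matrix.one_fin_two],
   by simp [Matrix.mul_fin_two, Matrix.one_fin_two]⟩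

/-- diag(u,1) -/
def Dl (u : Rˣ) : GL (Fin 2) R :=
  ⟨!![(u:R), 0; 0, 1], !![((u⁻¹:Rˣ):R), 0; 0, 1],
   by simp [Matrix.mul_fin_two, Matrix.one_fin_two],
   by simp [Matrix.mul_fin_two, Matrix.one_fin_two]⟩

/-- diag(u,u⁻¹) -/
def Du (u : Rˣ) : GL (Fin 2) R :=
  ⟨!![(u:R), 0; 0, ((u⁻¹:Rˣ):R)], !![((u⁻¹:Rˣ):R), 0; 0, (u:R)],
   by simp [Matrix.mul_fin_two, Matrix.one_fin_two],
   by simp [Matrix.mul_fin_two, Matrix.one_fin_two]⟩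

/-- the swap matrix -/
def Wu : GL (Fin 2) R :=
  ⟨!![0, 1; 1, 0], !![0, 1; 1, 0],
   by simp [Matrix.mul_fin_two, Matrix.one_fin_two],
   by simp [Matrix.mul_fin_two, Matrix.one_fin_two]⟩

lemma comm_Dl_Eu (u : Rˣ) (y : R) : ⁅Dl u, Eu y⁆ = Eu (((u:R) - 1) * y) := by
  apply Units.ext
  simp [commutatorElement_def, Eu, Dl, Units.inv_mk, Matrix.mul_fin_two]
  ring

lemma comm_Dl_Fu (u : Rˣ) (y : R) :
    ⁅Dl u, Fu y⁆ = Fu ((((u⁻¹:Rˣ):R) - 1) * y) := by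
  apply Units.ext
  simp [commutatorElement_def, Fu, Dl, Units.inv_mk, Matrix.mul_fin_two]
  ring

lemma Du_eq_comm (u : Rˣ) : Du u = ⁅Dl u, Wu⁆ := by
  apply Units.ext
  simp [commutatorElement_def, Du, Dl, Wu, Units.inv_mk, Matrix.mul_fin_two]

lemma Eu_inv (x : R) : (Eu x)⁻¹ = Eu (-x) := by
  apply Units.ext
  simp [Eu, Units.inv_mk]

lemma decomp (M : GL (Fin 2) R) (u : Rˣ) (hu : (u:R) = M.val 0 0)
    (hdet : M.val.det = 1) :
    M = Fu (M.val 1 0 * ((u⁻¹:Rˣ):R)) * Du u * Eu (M.val 0 1 * ((u⁻¹:Rˣ):R)) := by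
  have h1 : (u:R) * ((u⁻¹:Rˣ):R) = 1 := u.mul_inv
  have hd : M.val 0 0 * M.val 1 1 - M.val 0 1 * M.val 1 0 = 1 := by
    rw [← Matrix.det_fin_two]; exact hdet
  apply Units.ext
  show M.val = _
  rw [Units.val_mul, Units.val_mul]
  show M.val = (!![1, 0; M.val 1 0 * ((u⁻¹:Rˣ):R), 1] *
      !![(u:R), 0; 0, ((u⁻¹:Rˣ):R)]) * !![1, M.val 0 1 * ((u⁻¹:Rˣ):R); 0, 1]
  rw [Matrix.mul_fin_two, Matrix.mul_fin_two]
  ext i j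
  fin_cases i <;> fin_cases j <;> simp
  · exact hu.symm
  · linear_combination (-(M.val 0 1)) * h1
  · linear_combination (-(M.val 1 1)) * h1 + ((u⁻¹:Rˣ):R) * hd
      + (M.val 1 1 * ((u⁻¹:Rˣ):R)) * hu

end Alg
section Padic
variable {p : ℕ} [Fact p.Prime]

lemma mem_ker_toZMod {x : ℤ_[p]} (h : PadicInt.toZMod x = 0) :
    x ∈ IsLocalRing.maximalIdeal ℤ_[p] := by
  rw [← PadicInt.ker_toZMod]; exact RingHom.mem_ker.mpr h

lemma isUnit_of_toZMod_ne {x : ℤ_[p]} (h : PadicInt.toZMod x ≠ 0) : IsUnit x := by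
  by_contra h'
  have hx : x ∈ RingHom.ker (PadicInt.toZMod (p := p)) := by
    rw [PadicInt.ker_toZMod, IsLocalRing.mem_maximalIdeal]
    exact h'
  exact h (RingHom.mem_ker.mp hx)

lemma continuous_toZMod : Continuous (PadicInt.toZMod (p := p)) := by
  rw [continuous_discrete_rng]
  intro b
  rw [Metric.isOpen_iff]
  intro x hx
  refine ⟨1, one_pos, fun y hy => ?_⟩
  simp only [Set.mem_preimage, Set.mem_singleton_iff] at hx ⊢
  have h1 : PadicInt.toZMod (y - x) = 0 := by
    have hm : y - x ∈ IsLocalRing.maximalIdeal ℤ_[p] := by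
      rw [IsLocalRing.mem_maximalIdeal, mem_nonunits_iff, PadicInt.not_isUnit_iff]
      simpa [dist_eq_norm] using hy
    rw [← PadicInt.ker_toZMod] at hm
    exact RingHom.mem_ker.mp hm
  have h2 := map_sub PadicInt.toZMod y x
  rw [h1] at h2
  rw [← hx]
  linear_combination -h2
end Padic
section Z3gen
variable {R : Type*} [CommRing R]

lemma Du_mem (u : Rˣ) : Du u ∈ commutator (GL (Fin 2) R) := by
  rw [Du_eq_comm]
  exact Subgroup.commutator_mem_commutator (Subgroup.mem_top _) (Subgroup.mem_top _)
end Z3gen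

section Z3

lemma neg_two_unit3 : IsUnit (-2 : ℤ_[3]) := by
  apply isUnit_of_toZMod_ne
  rw [map_neg, map_ofNat]
  decide

lemma Eu_mem3 (x : ℤ_[3]) : Eu x ∈ commutator (GL (Fin 2) ℤ_[3]) := by
  obtain ⟨v, hv⟩ := neg_two_unit3
  have key : (((-1 : ℤ_[3]ˣ) : ℤ_[3]) - 1) * (((v⁻¹ : ℤ_[3]ˣ) : ℤ_[3]) * x) = x := by
    have h1 : (v : ℤ_[3]) * ((v⁻¹ : ℤ_[3]ˣ) : ℤ_[3]) = 1 := v.mul_inv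
    rw [Units.val_neg, Units.val_one]
    rw [show ((-1 : ℤ_[3]) - 1) = (-2 : ℤ_[3]) by norm_num, ← hv, ← mul_assoc, h1, one_mul]
  rw [← key, ← comm_Dl_Eu]
  exact Subgroup.commutator_mem_commutator (Subgroup.mem_top _) (Subgroup.mem_top _)

lemma Fu_mem3 (x : ℤ_[3]) : Fu x ∈ commutator (GL (Fin 2) ℤ_[3]) := by
  obtain ⟨v, hv⟩ := neg_two_unit3
  have key : ((((-1 : ℤ_[3]ˣ)⁻¹ : ℤ_[3]ˣ) : ℤ_[3]) - 1) * (((v⁻¹ : ℤ_[3]ˣ) : ℤ_[3]) * x) = x := by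
    have h1 : (v : ℤ_[3]) * ((v⁻¹ : ℤ_[3]ˣ) : ℤ_[3]) = 1 := v.mul_inv
    rw [inv_neg, inv_one, Units.val_neg, Units.val_one]
    rw [show ((-1 : ℤ_[3]) - 1) = (-2 : ℤ_[3]) by norm_num, ← hv, ← mul_assoc, h1, one_mul]
  rw [← key, ← comm_Dl_Fu]
  exact Subgroup.commutator_mem_commutator (Subgroup.mem_top _) (Subgroup.mem_top _)

lemma sl3_mem (M : GL (Fin 2) ℤ_[3]) (hdet : M.val.det = 1) :
    M ∈ commutator (GL (Fin 2) ℤ_[3]) := by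
  by_cases ha : IsUnit (M.val 0 0)
  · obtain ⟨u, hu⟩ := ha
    rw [decomp M u hu hdet]
    exact mul_mem (mul_mem (Fu_mem3 _) (Du_mem u)) (Eu_mem3 _)
  · set N := Eu (1 : ℤ_[3]) * M with hN
    have hN00 : N.val 0 0 = M.val 0 0 + M.val 1 0 := by
      show ((Eu (1 : ℤ_[3])).val * M.val) 0 0 = _
      simp [Eu, Matrix.mul_apply, Fin.sum_univ_two]
    have hNdet : N.val.det = 1 := by
      show ((Eu (1 : ℤ_[3])).val * M.val).det = 1
      rw [Matrix.det_mul, hdet, mul_one]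
      simp [Eu, Matrix.det_fin_two]
    have haN : IsUnit (N.val 0 0) := by
      rw [hN00]
      by_contra hs
      have hc : M.val 1 0 ∈ IsLocalRing.maximalIdeal ℤ_[3] := by
        have hmem := Ideal.sub_mem _ ((IsLocalRing.mem_maximalIdeal _).mpr hs)
          ((IsLocalRing.mem_maximalIdeal _).mpr ha)
        simpa using hmem
      have ha' : M.val 0 0 ∈ IsLocalRing.maximalIdeal ℤ_[3] :=
        (IsLocalRing.mem_maximalIdeal _).mpr ha
      have hd : M.val 0 0 * M.val 1 1 - M.val 0 1 * M.val 1 0 = 1 := by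
        rw [← Matrix.det_fin_two]; exact hdet
      have h1 : (1 : ℤ_[3]) ∈ IsLocalRing.maximalIdeal ℤ_[3] := by
        rw [← hd]
        exact Ideal.sub_mem _ (Ideal.mul_mem_right _ _ ha') (Ideal.mul_mem_left _ _ hc)
      exact (Ideal.ne_top_iff_one _).mp
        (IsLocalRing.maximalIdeal.isMaximal ℤ_[3]).ne_top h1
    obtain ⟨u, hu⟩ := haN
    have hNmem : N ∈ commutator (GL (Fin 2) ℤ_[3]) := by
      rw [decomp N u hu hNdet]
      exact mul_mem (mul_mem (Fu_mem3 _) (Du_mem u)) (Eu_mem3 _)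
    have hM : M = Eu (-1 : ℤ_[3]) * N := by
      rw [hN, ← Eu_inv, inv_mul_cancel_left]
    rw [hM]
    exact mul_mem (Eu_mem3 _) hNmem

theorem part1 : (commutator (GL (Fin 2) ℤ_[3])).topologicalClosure
    = (Matrix.GeneralLinearGroup.det (n := Fin 2) (R := ℤ_[3])).ker := by
  apply le_antisymm
  · apply Subgroup.topologicalClosure_minimal
    · exact Abelianization.commutator_subset_ker _
    · have hset : ((Matrix.GeneralLinearGroup.det (n := Fin 2) (R := ℤ_[3])).ker
          : Set (GL (Fin 2) ℤ_[3]))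
          = (fun g : GL (Fin 2) ℤ_[3] => (g.val).det) ⁻¹' {1} := by
        ext g
        simp [MonoidHom.mem_ker, Units.ext_iff, Matrix.GeneralLinearGroup.val_det_apply]
      rw [hset]
      exact IsClosed.preimage (Units.continuous_val.matrix_det) isClosed_singleton
  · intro g hg
    apply Subgroup.le_topologicalClosure
    apply sl3_mem
    have h := MonoidHom.mem_ker.mp hg
    have : ((Matrix.GeneralLinearGroup.det (n := Fin 2) (R := ℤ_[3]) g : ℤ_[3]ˣ) : ℤ_[3])
        = 1 := by rw [h]; rfl
    rwa [Matrix.GeneralLinearGroup.val_det_apply] at this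
end Z3
section Z2

/-- the 3-cycle mod 2 -/
def Cbar : GL (Fin 2) (ZMod 2) :=
  ⟨!![1, 1; 1, 0], !![0, 1; 1, 1], by decide, by decide⟩

/-- the sign character of `GL₂(𝔽₂) ≅ S₃` -/
def psi : GL (Fin 2) (ZMod 2) →* ℤˣ where
  toFun g := if g = 1 ∨ g = Cbar ∨ g = Cbar * Cbar then 1 else -1
  map_one' := by decide
  map_mul' := by decide

lemma psi_eq_one {m : GL (Fin 2) (ZMod 2)} (h : psi m = 1) :
    m = 1 ∨ m = Cbar ∨ m = Cbar * Cbar := by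
  by_contra hm
  simp only [psi, MonoidHom.coe_mk, OneHom.coe_mk] at h
  rw [if_neg hm] at h
  exact absurd h (by decide)

/-- reduction mod 2 on `GL₂` -/
noncomputable def redGL : GL (Fin 2) ℤ_[2] →* GL (Fin 2) (ZMod 2) :=
  Units.map ((PadicInt.toZMod (p := 2)).mapMatrix).toMonoidHom

lemma continuous_redGL : Continuous redGL := by
  rw [Units.continuous_iff]
  constructor
  · have h : (Units.val ∘ redGL)
        = fun g : GL (Fin 2) ℤ_[2] =>
          ((g : Matrix (Fin 2) (Fin 2) ℤ_[2]).map (PadicInt.toZMod)) := by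
      funext g; simp [redGL, RingHom.mapMatrix_apply]
    rw [h]
    exact Units.continuous_val.matrix_map continuous_toZMod
  · have h : (fun g : GL (Fin 2) ℤ_[2] => (((redGL g)⁻¹ : GL (Fin 2) (ZMod 2))
        : Matrix (Fin 2) (Fin 2) (ZMod 2)))
        = fun g => ((g⁻¹ : GL (Fin 2) ℤ_[2]) : Matrix (Fin 2) (Fin 2) ℤ_[2]).map
          (PadicInt.toZMod) := by
      funext g; rw [← map_inv redGL g]; simp [redGL, RingHom.mapMatrix_apply]
    rw [h]
    exact Units.continuous_coe_inv.matrix_map continuous_toZMod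

/-- the sign character on `GL₂(ℤ₂)` -/
noncomputable def phi : GL (Fin 2) ℤ_[2] →* ℤˣ := psi.comp redGL

lemma continuous_phi : Continuous phi := by
  rw [phi, MonoidHom.coe_comp]
  exact Continuous.comp (continuous_of_discreteTopology) continuous_redGL

lemma Eu2_mem (y : ℤ_[2]) : Eu (2 * y) ∈ commutator (GL (Fin 2) ℤ_[2]) := by
  have h3 : IsUnit (3 : ℤ_[2]) := isUnit_of_toZMod_ne (by rw [map_ofNat]; decide)
  obtain ⟨u, hu⟩ := h3
  have key : (((u : ℤ_[2]ˣ) : ℤ_[2]) - 1) * y = 2 * y := by rw [hu]; ring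
  rw [← key, ← comm_Dl_Eu]
  exact Subgroup.commutator_mem_commutator (Subgroup.mem_top _) (Subgroup.mem_top _)

lemma Fu2_mem (y : ℤ_[2]) : Fu (2 * y) ∈ commutator (GL (Fin 2) ℤ_[2]) := by
  have h3 : IsUnit (3 : ℤ_[2]) := isUnit_of_toZMod_ne (by rw [map_ofNat]; decide)
  obtain ⟨u, hu⟩ := h3
  have h1 : (u : ℤ_[2]) * ((u⁻¹ : ℤ_[2]ˣ) : ℤ_[2]) = 1 := u.mul_inv
  rw [hu] at h1
  have key : (((u⁻¹ : ℤ_[2]ˣ) : ℤ_[2]) - 1) * (-(3 * y)) = 2 * y := by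
    linear_combination (-y) * h1
  rw [← key, ← comm_Dl_Fu]
  exact Subgroup.commutator_mem_commutator (Subgroup.mem_top _) (Subgroup.mem_top _)

lemma two_dvd_of_toZMod {x : ℤ_[2]} (h : PadicInt.toZMod x = 0) : ∃ y, x = 2 * y := by
  have hm : x ∈ IsLocalRing.maximalIdeal ℤ_[2] := mem_ker_toZMod h
  rw [PadicInt.maximalIdeal_eq_span_p, Ideal.mem_span_singleton] at hm
  obtain ⟨y, hy⟩ := hm
  exact ⟨y, by push_cast at hy; exact_mod_cast hy⟩

lemma gamma_mem (M : GL (Fin 2) ℤ_[2]) (hdet : M.val.det = 1)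
    (hred : redGL M = 1) : M ∈ commutator (GL (Fin 2) ℤ_[2]) := by
  have hval : (M.val).map (PadicInt.toZMod) = 1 := by
    have h := congrArg Units.val hred
    simpa [redGL, RingHom.mapMatrix_apply] using h
  have ha : PadicInt.toZMod (M.val 0 0) = 1 := by
    have h := congrArg (fun A => A 0 0) hval
    simpa [Matrix.map_apply, Matrix.one_apply] using h
  have hb : PadicInt.toZMod (M.val 0 1) = 0 := by
    have h := congrArg (fun A => A 0 1) hval
    simpa [Matrix.map_apply, Matrix.one_apply] using h
  have hc : PadicInt.toZMod (M.val 1 0) = 0 := by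
    have h := congrArg (fun A => A 1 0) hval
    simpa [Matrix.map_apply, Matrix.one_apply] using h
  have haU : IsUnit (M.val 0 0) := isUnit_of_toZMod_ne (by rw [ha]; decide)
  obtain ⟨u, hu⟩ := haU
  obtain ⟨y, hy⟩ := two_dvd_of_toZMod hb
  obtain ⟨z, hz⟩ := two_dvd_of_toZMod hc
  rw [decomp M u hu hdet]
  have hb' : M.val 0 1 * ((u⁻¹ : ℤ_[2]ˣ) : ℤ_[2]) = 2 * (y * ((u⁻¹ : ℤ_[2]ˣ) : ℤ_[2])) := by
    rw [hy]; ring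
  have hc' : M.val 1 0 * ((u⁻¹ : ℤ_[2]ˣ) : ℤ_[2]) = 2 * (z * ((u⁻¹ : ℤ_[2]ˣ) : ℤ_[2])) := by
    rw [hz]; ring
  rw [hb', hc']
  exact mul_mem (mul_mem (Fu2_mem _) (Du_mem u)) (Eu2_mem _)

/-- a lift of the 3-cycle: `⁅Eu 1, Fu 1⁆` -/
noncomputable def Tu : GL (Fin 2) ℤ_[2] :=
  ⟨!![3, -1; 1, 0], !![0, 1; -1, 3],
   by norm_num [Matrix.mul_fin_two, ← Matrix.one_fin_two],
   by norm_num [Matrix.mul_fin_two, ← Matrix.one_fin_two]⟩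

lemma Tu_mem : Tu ∈ commutator (GL (Fin 2) ℤ_[2]) := by
  have h : Tu = ⁅Eu (1 : ℤ_[2]), Fu 1⁆ := by
    apply Units.ext
    simp [Tu, Eu, Fu, commutatorElement_def, Units.inv_mk, Matrix.mul_fin_two]
    norm_num
  rw [h]
  exact Subgroup.commutator_mem_commutator (Subgroup.mem_top _) (Subgroup.mem_top _)

lemma redGL_Tu : redGL Tu = Cbar := by
  apply Units.ext
  show (Tu.val).map (PadicInt.toZMod) = Cbar.val
  ext i j
  fin_cases i <;> fin_cases j <;>
    simp [Tu, Cbar, Matrix.map_apply, map_ofNat] <;> decide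

lemma Tu_inv_det : ((Tu⁻¹ : GL (Fin 2) ℤ_[2]) : Matrix (Fin 2) (Fin 2) ℤ_[2]).det = 1 := by
  show (!![0, 1; -1, 3] : Matrix (Fin 2) (Fin 2) ℤ_[2]).det = 1
  rw [Matrix.det_fin_two]
  norm_num

end Z2
section Z2final

lemma det_coe_eq_one {R : Type*} [CommRing R] {g : GL (Fin 2) R}
    (hg : g ∈ (Matrix.GeneralLinearGroup.det (n := Fin 2) (R := R)).ker) :
    (g : Matrix (Fin 2) (Fin 2) R).det = 1 := by
  have h := MonoidHom.mem_ker.mp hg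
  have h2 : ((Matrix.GeneralLinearGroup.det (n := Fin 2) (R := R) g : Rˣ) : R) = 1 := by
    rw [h]; rfl
  rwa [Matrix.GeneralLinearGroup.val_det_apply] at h2

lemma part2eq : (commutator (GL (Fin 2) ℤ_[2])).topologicalClosure
    = phi.ker ⊓ (Matrix.GeneralLinearGroup.det (n := Fin 2) (R := ℤ_[2])).ker := by
  apply le_antisymm
  · apply Subgroup.topologicalClosure_minimal
    · exact le_inf (Abelianization.commutator_subset_ker _)
        (Abelianization.commutator_subset_ker _)
    · have h1 : ((phi.ker : Subgroup (GL (Fin 2) ℤ_[2])) : Set (GL (Fin 2) ℤ_[2]))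
          = phi ⁻¹' {1} := by
        ext g; simp [MonoidHom.mem_ker]
      have h2 : (((Matrix.GeneralLinearGroup.det (n := Fin 2) (R := ℤ_[2])).ker
          : Subgroup (GL (Fin 2) ℤ_[2])) : Set (GL (Fin 2) ℤ_[2]))
          = (fun g : GL (Fin 2) ℤ_[2] => (g.val).det) ⁻¹' {1} := by
        ext g
        simp [MonoidHom.mem_ker, Units.ext_iff,
          Matrix.GeneralLinearGroup.val_det_apply]
      rw [Subgroup.coe_inf, h1, h2]
      exact IsClosed.inter (IsClosed.preimage continuous_phi isClosed_singleton)
        (IsClosed.preimage (Units.continuous_val.matrix_det) isClosed_singleton)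
  · rintro g hg
    apply Subgroup.le_topologicalClosure
    rw [Subgroup.mem_inf] at hg
    obtain ⟨hphi, hdetk⟩ := hg
    have hdet : (g : Matrix (Fin 2) (Fin 2) ℤ_[2]).det = 1 := det_coe_eq_one hdetk
    have hpsi : psi (redGL g) = 1 := hphi
    rcases psi_eq_one hpsi with h1 | h1 | h1
    · exact gamma_mem g hdet h1
    · have hmem : g * Tu⁻¹ ∈ commutator (GL (Fin 2) ℤ_[2]) := by
        apply gamma_mem
        · rw [Units.val_mul, Matrix.det_mul, hdet, one_mul, Tu_inv_det]
        · rw [redGL.map_mul, redGL.map_inv, redGL_Tu, h1, mul_inv_cancel]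
      have hgf : g = (g * Tu⁻¹) * Tu := by group
      rw [hgf]
      exact mul_mem hmem Tu_mem
    · have hmem : g * Tu⁻¹ * Tu⁻¹ ∈ commutator (GL (Fin 2) ℤ_[2]) := by
        apply gamma_mem
        · rw [Units.val_mul, Units.val_mul, Matrix.det_mul, Matrix.det_mul, hdet,
            one_mul, Tu_inv_det, one_mul]
        · rw [redGL.map_mul, redGL.map_mul, redGL.map_inv, redGL_Tu, h1]
          group
      have hgf : g = ((g * Tu⁻¹ * Tu⁻¹) * Tu) * Tu := by group
      rw [hgf]
      exact mul_mem (mul_mem hmem Tu_mem) Tu_mem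

lemma Eu1_ker_det : Eu (1 : ℤ_[2]) ∈
    (Matrix.GeneralLinearGroup.det (n := Fin 2) (R := ℤ_[2])).ker := by
  rw [MonoidHom.mem_ker]
  apply Units.ext
  rw [Matrix.GeneralLinearGroup.val_det_apply]
  show (!![1, 1; 0, 1] : Matrix (Fin 2) (Fin 2) ℤ_[2]).det = 1
  rw [Matrix.det_fin_two]
  norm_num

lemma phi_Eu1 : phi (Eu (1 : ℤ_[2])) = -1 := by
  have hr : redGL (Eu (1 : ℤ_[2]))
      = ⟨!![1, 1; 0, 1], !![1, 1; 0, 1], by decide, by decide⟩ := by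
    apply Units.ext
    show ((Eu (1 : ℤ_[2])).val).map (PadicInt.toZMod) = !![1, 1; 0, 1]
    ext i j
    fin_cases i <;> fin_cases j <;>
      simp [Eu, Matrix.map_apply]
  show psi (redGL (Eu (1 : ℤ_[2]))) = -1
  rw [hr]
  decide

theorem part2 : (commutator (GL (Fin 2) ℤ_[2])).topologicalClosure.relIndex
    (Matrix.GeneralLinearGroup.det (n := Fin 2) (R := ℤ_[2])).ker = 2 := by
  rw [part2eq, Subgroup.inf_relIndex_right, Subgroup.relIndex_ker]
  have htop : ((Matrix.GeneralLinearGroup.det (n := Fin 2) (R := ℤ_[2])).ker).map phi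
      = ⊤ := by
    rw [eq_top_iff]
    intro x _
    rcases Int.units_eq_one_or x with rfl | rfl
    · exact Subgroup.one_mem _
    · exact ⟨Eu (1 : ℤ_[2]), Eu1_ker_det, phi_Eu1⟩
  rw [htop, Subgroup.card_top, Nat.card_eq_fintype_card]
  exact Fintype.card_units_int
end Z2final

/-- the closed commutator subgroup of `GL₂(ℤ₃)` equals `SL₂(ℤ₃)`
(the kernel of the determinant), and the closed commutator subgroup of `GL₂(ℤ₂)`
has index 2 in `SL₂(ℤ₂)`. -/
theorem commutator_GL2_Z3_and_Z2 :
    (commutator (GL (Fin 2) ℤ_[3])).topologicalClosure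
        = (Matrix.GeneralLinearGroup.det (n := Fin 2) (R := ℤ_[3])).ker ∧
      (commutator (GL (Fin 2) ℤ_[2])).topologicalClosure.relIndex
        (Matrix.GeneralLinearGroup.det (n := Fin 2) (R := ℤ_[2])).ker = 2 := by
  exact ⟨part1, part2⟩
end

section
/- For every prime ℓ, the topological commutator subgroup GL₂(ℤ_ℓ)' of GL₂(ℤ_ℓ) is topologically generated by the set of commutators ABA⁻¹B⁻¹ where A, B range over pairs of matrices in GL₂(ℤ_ℓ) with det(A) = det(B). -/
open Matrix

section Aux

variable {R : Type*} [CommRing R]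

/-- diagonal unit matrix diag(u,1) as an element of GL₂. -/
def GL2t (u : Rˣ) : GL (Fin 2) R :=
  { val := Matrix.diagonal ![(u : R), 1]
    inv := Matrix.diagonal ![((u⁻¹ : Rˣ) : R), 1]
    val_inv := by
      ext i j
      fin_cases i <;> fin_cases j <;> simp [Matrix.mul_apply, Fin.sum_univ_two]
    inv_val := by
      ext i j
      fin_cases i <;> fin_cases j <;> simp [Matrix.mul_apply, Fin.sum_univ_two] }

lemma GL2t_det (u : Rˣ) : Matrix.GeneralLinearGroup.det (GL2t u) = u := by
  ext
  simp [GL2t, Matrix.det_diagonal, Fin.prod_univ_two]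

lemma GL2t_commute (u v : Rˣ) : Commute (GL2t u) (GL2t v) := by
  apply Units.ext
  show ((GL2t u : Matrix (Fin 2) (Fin 2) R) * GL2t v) = (GL2t v : Matrix (Fin 2) (Fin 2) R) * GL2t u
  ext i j
  fin_cases i <;> fin_cases j <;>
    simp [GL2t, Matrix.mul_apply, Fin.sum_univ_two, mul_comm]

lemma detConjGL (g A : GL (Fin 2) R) :
    Matrix.GeneralLinearGroup.det (g * A * g⁻¹) = Matrix.GeneralLinearGroup.det A := by
  rw [_root_.map_mul, _root_.map_mul, map_inv, mul_comm (Matrix.GeneralLinearGroup.det g),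
    mul_inv_cancel_right]

end Aux

section Main

variable {R : Type*} [CommRing R]

/-- the set of equal-determinant commutators. -/
def eqDetCommSet (R : Type*) [CommRing R] : Set (GL (Fin 2) R) :=
  {x | ∃ A B : GL (Fin 2) R,
    Matrix.GeneralLinearGroup.det A = Matrix.GeneralLinearGroup.det B ∧
      x = A * B * A⁻¹ * B⁻¹}

lemma eqDetComm_normal : (Subgroup.closure (eqDetCommSet R)).Normal := by
  constructor
  intro n hn g
  induction hn using Subgroup.closure_induction with
  | mem x hx =>
      obtain ⟨A, B, hdet, rfl⟩ := hx
      refine Subgroup.subset_closure ⟨g * A * g⁻¹, g * B * g⁻¹, ?_, by group⟩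
      rw [detConjGL, detConjGL, hdet]
  | one => simpa using Subgroup.one_mem _
  | mul x y hx hy ihx ihy =>
      have := Subgroup.mul_mem _ ihx ihy
      convert this using 1
      group
  | inv x hx ih =>
      have := Subgroup.inv_mem _ ih
      convert this using 1
      group

local notation "N" => Subgroup.closure (eqDetCommSet R)

lemma mk_commute_of_eq_det (A B : GL (Fin 2) R)
    (h : Matrix.GeneralLinearGroup.det A = Matrix.GeneralLinearGroup.det B) :
    letI : (N).Normal := eqDetComm_normal
    Commute (QuotientGroup.mk' N A) (QuotientGroup.mk' N B) := by
  letI : (N).Normal := eqDetComm_normal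
  have hmem : A * B * A⁻¹ * B⁻¹ ∈ N := Subgroup.subset_closure ⟨A, B, h, rfl⟩
  have h1 : QuotientGroup.mk' N (A * B * A⁻¹ * B⁻¹) = 1 := by
    rw [← MonoidHom.mem_ker, QuotientGroup.ker_mk']
    exact hmem
  simp only [_root_.map_mul, map_inv] at h1
  rw [mul_inv_eq_one, mul_inv_eq_iff_eq_mul] at h1
  exact h1

/-- In the quotient, every element of determinant one is central. -/
lemma mk_commute_of_det_one (A B : GL (Fin 2) R)
    (h : Matrix.GeneralLinearGroup.det B = 1) :
    letI : (N).Normal := eqDetComm_normal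
    Commute (QuotientGroup.mk' N A) (QuotientGroup.mk' N B) := by
  letI : (N).Normal := eqDetComm_normal
  have key : Commute (QuotientGroup.mk' N A) (QuotientGroup.mk' N (A * B)) := by
    apply mk_commute_of_eq_det
    rw [_root_.map_mul, h, mul_one]
  have heq := key.eq
  rw [_root_.map_mul] at heq
  unfold Commute SemiconjBy
  exact mul_left_cancel (a := QuotientGroup.mk' N A)
    (by rw [← mul_assoc, ← mul_assoc]; rw [← mul_assoc] at heq; exact heq)

/-- The quotient by the equal-det commutator subgroup is abelian. -/
lemma mk_commute (A B : GL (Fin 2) R) :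
    letI : (N).Normal := eqDetComm_normal
    Commute (QuotientGroup.mk' N A) (QuotientGroup.mk' N B) := by
  letI : (N).Normal := eqDetComm_normal
  set u := Matrix.GeneralLinearGroup.det A with hu
  set v := Matrix.GeneralLinearGroup.det B with hv
  have hA : A = (A * (GL2t u)⁻¹) * GL2t u := by group
  have hB : B = (B * (GL2t v)⁻¹) * GL2t v := by group
  have hdA : Matrix.GeneralLinearGroup.det (A * (GL2t u)⁻¹) = 1 := by
    rw [_root_.map_mul, map_inv, GL2t_det, ← hu, mul_inv_cancel]
  have hdB : Matrix.GeneralLinearGroup.det (B * (GL2t v)⁻¹) = 1 := by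
    rw [_root_.map_mul, map_inv, GL2t_det, ← hv, mul_inv_cancel]
  rw [hA, hB, _root_.map_mul, _root_.map_mul]
  have c1 : ∀ X : GL (Fin 2) R,
      Commute (QuotientGroup.mk' N X) (QuotientGroup.mk' N (A * (GL2t u)⁻¹)) :=
    fun X => mk_commute_of_det_one X _ hdA
  have c2 : ∀ X : GL (Fin 2) R,
      Commute (QuotientGroup.mk' N X) (QuotientGroup.mk' N (B * (GL2t v)⁻¹)) :=
    fun X => mk_commute_of_det_one X _ hdB
  have c3 : Commute (QuotientGroup.mk' N (GL2t u)) (QuotientGroup.mk' N (GL2t v)) := by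
    have hgl := (GL2t_commute u v).eq
    unfold Commute SemiconjBy
    rw [← _root_.map_mul, ← _root_.map_mul, hgl]
  exact Commute.mul_left (Commute.mul_right (c2 _) ((c1 (GL2t v)).symm)) (Commute.mul_right (c2 _) c3)

lemma commutator_eq_eqDetClosure :
    commutator (GL (Fin 2) R) = Subgroup.closure (eqDetCommSet R) := by
  apply le_antisymm
  · rw [commutator_eq_closure, Subgroup.closure_le]
    rintro x ⟨A, B, rfl⟩
    letI : (N).Normal := eqDetComm_normal
    have h := (mk_commute A B).eq
    have hone : QuotientGroup.mk' N (@Bracket.bracket _ _ commutatorElement A B) = 1 := by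
      rw [commutatorElement_def]
      simp only [_root_.map_mul, map_inv]
      rw [h]
      group
    rw [← MonoidHom.mem_ker, QuotientGroup.ker_mk'] at hone
    exact hone
  · rw [Subgroup.closure_le]
    rintro x ⟨A, B, hdet, rfl⟩
    rw [SetLike.mem_coe, commutator_eq_closure]
    apply Subgroup.subset_closure
    exact ⟨A, B, by rw [commutatorElement_def]⟩

end Main

/-- for every prime `ℓ`, the closed commutator subgroup of `GL₂(ℤ_ℓ)`
is topologically generated by the commutators `A * B * A⁻¹ * B⁻¹` with
`A, B ∈ GL₂(ℤ_ℓ)` satisfying `det A = det B`. -/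
theorem GL2_Zl_commutator_topologically_generated_by_equal_det_commutators
    (ℓ : ℕ) [Fact ℓ.Prime] :
    (commutator (GL (Fin 2) ℤ_[ℓ])).topologicalClosure
      = (Subgroup.closure {x : GL (Fin 2) ℤ_[ℓ] |
          ∃ A B : GL (Fin 2) ℤ_[ℓ],
            Matrix.GeneralLinearGroup.det A = Matrix.GeneralLinearGroup.det B ∧
              x = A * B * A⁻¹ * B⁻¹}).topologicalClosure := by
  congr 1
  exact commutator_eq_eqDetClosure
end

section
/- Goursat-type lemma for profinite groups: Let B₁, …, Bₙ be profinite groups such that for all distinct i, j, the groups B_i and B_j have no finite simple group as a common (continuous) quotient. If H is a closed subgroup of the product ∏ᵢ Bᵢ such that each projection pⱼ : H → Bⱼ is surjective, then H = ∏ᵢ Bᵢ. -/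
open Function

/-- In a finite group, above any proper normal subgroup there is a maximal proper
normal subgroup. -/
theorem exists_max_normal (G : Type) [Group G] [Finite G] (N : Subgroup G)
    (hNn : N.Normal) (hN : N ≠ ⊤) :
    ∃ M : Subgroup G, N ≤ M ∧ M ≠ ⊤ ∧ M.Normal ∧
      ∀ K : Subgroup G, K.Normal → M < K → K = ⊤ := by
  haveI : WellFoundedGT (Subgroup G) := Finite.to_wellFoundedGT
  obtain ⟨M, ⟨hMn, hNM, hMne⟩, hmax⟩ :=
    (IsWellFounded.wf (r := ((· > ·) : Subgroup G → Subgroup G → Prop))).has_min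
      {K : Subgroup G | K.Normal ∧ N ≤ K ∧ K ≠ ⊤} ⟨N, hNn, le_refl N, hN⟩
  refine ⟨M, hNM, hMne, hMn, fun K hK hMK => ?_⟩
  by_contra hKne
  exact hmax K ⟨hK, le_trans hNM hMK.le, hKne⟩ hMK

/-- The quotient of a group by a maximal proper normal subgroup is simple. -/
theorem simple_of_max_normal (G : Type) [Group G] (M : Subgroup G) [M.Normal]
    (hMne : M ≠ ⊤) (hmax : ∀ K : Subgroup G, K.Normal → M < K → K = ⊤) :
    IsSimpleGroup (G ⧸ M) := by
  have hnt : Nontrivial (G ⧸ M) := by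
    obtain ⟨g, hg⟩ : ∃ g, g ∉ M := by
      by_contra h; push_neg at h
      exact hMne (Subgroup.eq_top_iff' M |>.mpr h)
    exact ⟨⟨(g : G ⧸ M), 1, by simpa [QuotientGroup.eq_one_iff] using hg⟩⟩
  refine ⟨fun K hK => ?_⟩
  set C := K.comap (QuotientGroup.mk' M) with hC
  have hCn : C.Normal := hK.comap _
  have hMC : M ≤ C := by
    intro m hm
    show QuotientGroup.mk' M m ∈ K
    have : QuotientGroup.mk' M m = 1 := (QuotientGroup.eq_one_iff m).mpr hm
    rw [this]; exact K.one_mem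
  have hKC : Subgroup.map (QuotientGroup.mk' M) C = K :=
    Subgroup.map_comap_eq_self_of_surjective (QuotientGroup.mk'_surjective M) K
  by_cases hCtop : C = ⊤
  · right
    rw [← hKC, hCtop]
    exact Subgroup.map_top_of_surjective _ (QuotientGroup.mk'_surjective M)
  · left
    have hCM : C = M := by
      by_contra hne
      exact hCtop (hmax C hCn (lt_of_le_of_ne hMC (fun h => hne h.symm)))
    rw [← hKC, hCM]
    refine le_bot_iff.mp ?_
    rintro _ ⟨m, hm, rfl⟩
    simpa [Subgroup.mem_bot, QuotientGroup.eq_one_iff] using hm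

/-- A simple quotient of a finite product of groups is a quotient of one of the factors. -/
theorem simple_quotient_pi {n : ℕ} (G : Fin n → Type) [∀ i, Group (G i)]
    {S : Type} [Group S] [IsSimpleGroup S] (φ : (∀ i, G i) →* S) (hφ : Surjective φ) :
    ∃ i, Surjective (φ.comp (MonoidHom.mulSingle G i)) := by
  by_contra h
  push_neg at h
  have hsingle : ∀ (i : Fin n) (a : G i) (y : ∀ i, G i),
      y * Pi.mulSingle i a * y⁻¹ = Pi.mulSingle i (y i * a * (y i)⁻¹) := by
    intro i a y
    funext j
    by_cases hj : j = i
    · subst hj; simp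
    · simp [Pi.mulSingle_eq_of_ne hj]
  have hbot : ∀ i, (φ.comp (MonoidHom.mulSingle G i)).range = ⊥ := by
    intro i
    have hnormal : (φ.comp (MonoidHom.mulSingle G i)).range.Normal := by
      constructor
      rintro _ ⟨a, rfl⟩ g
      obtain ⟨y, rfl⟩ := hφ g
      refine ⟨y i * a * (y i)⁻¹, ?_⟩
      simp only [MonoidHom.comp_apply, MonoidHom.mulSingle_apply]
      rw [← hsingle, map_mul, map_mul, map_inv]
    rcases IsSimpleGroup.eq_bot_or_eq_top_of_normal _ hnormal with h1 | h1
    · exact h1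
    · exact absurd (MonoidHom.range_eq_top.mp h1) (h i)
  have hone : ∀ (i : Fin n) (a : G i), φ (Pi.mulSingle i a) = 1 := by
    intro i a
    have : φ.comp (MonoidHom.mulSingle G i) a ∈ (φ.comp (MonoidHom.mulSingle G i)).range :=
      ⟨a, rfl⟩
    rw [hbot i] at this
    simpa using this
  have hφ1 : φ = 1 := MonoidHom.pi_ext (g := (1 : (∀ i, G i) →* S)) (by simp [hone])
  obtain ⟨s, t, hst⟩ := (inferInstance : Nontrivial S)
  obtain ⟨y, rfl⟩ := hφ s
  obtain ⟨z, rfl⟩ := hφ t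
  rw [hφ1] at hst
  exact hst rfl

/-- Finite Goursat lemma. -/
theorem fin_goursat (n : ℕ) :
    ∀ (G : Fin n → Type) [∀ i, Group (G i)] [∀ i, Finite (G i)],
    (∀ i j, i ≠ j → ∀ (Q : Type) [Group Q] [Finite Q] [IsSimpleGroup Q],
      ¬ ((∃ f : G i →* Q, Surjective f) ∧ (∃ g : G j →* Q, Surjective g))) →
    ∀ K : Subgroup (∀ i, G i), (∀ j, Surjective fun k : K => (k : ∀ i, G i) j) → K = ⊤ := by
  induction n with
  | zero =>
    intro G _ _ _ K _
    rw [eq_top_iff]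
    intro y _
    have : y = 1 := Subsingleton.elim _ _
    rw [this]; exact K.one_mem
  | succ n ih =>
    intro G _ _ hsimple K hproj
    -- the restriction homomorphism to the last n coordinates
    set r : (∀ i : Fin (n + 1), G i) →* (∀ i : Fin n, G i.succ) :=
      { toFun := fun x i => x i.succ
        map_one' := rfl
        map_mul' := fun _ _ => rfl } with hr
    have hK2 : K.map r = ⊤ := by
      refine ih (fun i => G i.succ) ?_ (K.map r) ?_
      · intro i j hij Q _ _ _ hQ
        exact hsimple i.succ j.succ (fun e => hij (Fin.succ_injective n e)) Q hQ
      · intro j g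
        obtain ⟨k, hk⟩ := hproj j.succ g
        exact ⟨⟨r k, Subgroup.mem_map_of_mem r k.2⟩, hk⟩
    have hlift : ∀ t : ∀ i : Fin n, G i.succ, ∃ x, x ∈ K ∧ r x = t := by
      intro t
      have ht : t ∈ K.map r := hK2.symm ▸ Subgroup.mem_top t
      obtain ⟨y, hy, hyt⟩ := ht
      exact ⟨y, hy, hyt⟩
    -- the key decomposition lemma
    have hsingle : ∀ a b : ∀ i : Fin (n + 1), G i, r a = r b →
        Pi.mulSingle 0 (a 0 * (b 0)⁻¹) = a * b⁻¹ := by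
      intro a b hab
      funext i
      refine Fin.cases ?_ (fun j => ?_) i
      · simp
      · have h1 : a j.succ = b j.succ := congrFun hab j
        simp [Pi.mulSingle_eq_of_ne (Fin.succ_ne_zero j), h1]
    set N₀ : Subgroup (G 0) := K.comap (MonoidHom.mulSingle G 0) with hN₀def
    have hN₀mem : ∀ g : G 0, g ∈ N₀ ↔ Pi.mulSingle 0 g ∈ K := fun g => Iff.rfl
    have hN₀normal : N₀.Normal := by
      constructor
      intro a ha g
      obtain ⟨k, hk0⟩ := hproj 0 g
      rw [hN₀mem]
      have heq : Pi.mulSingle (0 : Fin (n + 1)) (g * a * g⁻¹) =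
          (k : ∀ i, G i) * Pi.mulSingle 0 a * (k : ∀ i, G i)⁻¹ := by
        funext i
        refine Fin.cases ?_ (fun j => ?_) i
        · simp [hk0]
        · simp [Pi.mulSingle_eq_of_ne (Fin.succ_ne_zero j)]
      rw [heq]
      exact K.mul_mem (K.mul_mem k.2 ha) (K.inv_mem k.2)
    have hN₀top : N₀ = ⊤ := by
      by_contra hne
      obtain ⟨M, hNM, hMne, hMn, hmax⟩ := exists_max_normal (G 0) N₀ hN₀normal hne
      haveI := hMn
      haveI hQs : IsSimpleGroup (G 0 ⧸ M) := simple_of_max_normal (G 0) M hMne hmax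
      set f : G 0 →* (G 0 ⧸ M) := QuotientGroup.mk' M with hf
      have hfsurj : Surjective f := QuotientGroup.mk'_surjective M
      -- well-definedness
      have key : ∀ a b : ∀ i, G i, a ∈ K → b ∈ K → r a = r b → f (a 0) = f (b 0) := by
        intro a b ha hb hab
        have hmem : a 0 * (b 0)⁻¹ ∈ M := by
          apply hNM
          rw [hN₀mem, hsingle a b hab]
          exact K.mul_mem ha (K.inv_mem hb)
        have h1 : f (a 0 * (b 0)⁻¹) = 1 := (QuotientGroup.eq_one_iff _).mpr hmem
        rw [map_mul, map_inv] at h1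
        exact mul_inv_eq_one.mp h1
      choose x hxK hxr using hlift
      set F : (∀ i : Fin n, G i.succ) →* (G 0 ⧸ M) :=
        MonoidHom.mk' (fun t => f (x t 0)) (by
          intro t t'
          show f (x (t * t') 0) = f (x t 0) * f (x t' 0)
          have : f (x (t * t') 0) = f ((x t * x t') 0) := by
            apply key _ _ (hxK _) (K.mul_mem (hxK t) (hxK t'))
            rw [hxr, map_mul, hxr, hxr]
          rw [this]
          show f (x t 0 * x t' 0) = _
          rw [map_mul]) with hF
      have hFsurj : Surjective F := by
        intro q
        obtain ⟨g, rfl⟩ := hfsurj q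
        obtain ⟨k, hk0⟩ := hproj 0 g
        refine ⟨r k, ?_⟩
        show f (x (r k) 0) = f g
        rw [← hk0]
        exact key _ _ (hxK _) k.2 (hxr _)
      obtain ⟨i, hisurj⟩ := simple_quotient_pi (fun i => G i.succ) F hFsurj
      refine hsimple 0 i.succ (Fin.succ_ne_zero i).symm (G 0 ⧸ M)
        ⟨⟨f, hfsurj⟩, ⟨F.comp (MonoidHom.mulSingle (fun i => G i.succ) i), hisurj⟩⟩
    rw [eq_top_iff]
    intro y _
    obtain ⟨k, hkK, hkr⟩ := hlift (r y)
    have h1 : y * k⁻¹ ∈ K := by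
      rw [← hsingle y k hkr.symm]
      rw [← hN₀mem]
      rw [hN₀top]
      trivial
    have : y = (y * k⁻¹) * k := by group
    rw [this]
    exact K.mul_mem h1 hkK

/-- A homomorphism with open kernel into a discrete group is continuous. -/
theorem continuous_of_isOpen_ker {G Q : Type} [Group G] [TopologicalSpace G] [ContinuousMul G]
    [Group Q] [TopologicalSpace Q] [DiscreteTopology Q] (F : G →* Q)
    (h : IsOpen (F.ker : Set G)) : Continuous F := by
  rw [continuous_discrete_rng]
  intro q
  by_cases hq : ∃ a, F a = q
  · obtain ⟨a, rfl⟩ := hq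
    have : F ⁻¹' {F a} = (fun g => a⁻¹ * g) ⁻¹' (F.ker : Set G) := by
      ext g
      simp only [Set.mem_preimage, Set.mem_singleton_iff, SetLike.mem_coe,
        MonoidHom.mem_ker, map_mul, map_inv]
      constructor
      · intro hg; rw [hg]; group
      · intro hg; exact (inv_mul_eq_one.mp hg).symm
    rw [this]
    exact h.preimage (continuous_mul_left a⁻¹)
  · have : F ⁻¹' {q} = ∅ := by
      ext g; simp only [Set.mem_preimage, Set.mem_singleton_iff, Set.mem_empty_iff_false,
        iff_false]
      exact fun hg => hq ⟨g, hg⟩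
    rw [this]; exact isOpen_empty


/-- Goursat-type lemma for profinite groups: let `B₁, …, Bₙ` be
profinite groups such that for all distinct `i, j`, the groups `Bᵢ` and `Bⱼ` have no
finite simple group as a common continuous quotient.  If `H` is a closed subgroup of
`∏ᵢ Bᵢ` projecting surjectively onto each factor, then `H = ∏ᵢ Bᵢ`. -/
theorem goursat_profinite
    (n : ℕ) (B : Fin n → Type) [∀ i, Group (B i)] [∀ i, TopologicalSpace (B i)]
    [∀ i, IsTopologicalGroup (B i)] [∀ i, CompactSpace (B i)] [∀ i, T2Space (B i)]
    [∀ i, TotallyDisconnectedSpace (B i)]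
    (hsimple : ∀ i j, i ≠ j →
      ∀ (Q : Type) [Group Q] [Finite Q] [IsSimpleGroup Q] [TopologicalSpace Q] [DiscreteTopology Q],
        ¬ ((∃ f : B i →* Q, Continuous f ∧ Function.Surjective f) ∧
            (∃ g : B j →* Q, Continuous g ∧ Function.Surjective g)))
    (H : Subgroup (∀ i, B i)) (hH : IsClosed (H : Set (∀ i, B i)))
    (hproj : ∀ j, Function.Surjective fun h : H => (h : ∀ i, B i) j) :
    H = ⊤ := by

  by_contra hne
  obtain ⟨x, hx⟩ : ∃ x, x ∉ H := by
    by_contra h; push_neg at h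
    exact hne ((Subgroup.eq_top_iff' H).mpr h)
  have hopen : IsOpen ((H : Set (∀ i, B i))ᶜ) := hH.isOpen_compl
  rw [isOpen_pi_iff] at hopen
  obtain ⟨I, u, hu, husub⟩ := hopen x hx
  set W : ∀ i, Set (B i) := fun i => if i ∈ I then u i else Set.univ with hW
  have hWopen : ∀ i, IsOpen (W i) := by
    intro i; by_cases h : i ∈ I <;> simp only [hW, h, if_true, if_false]
    · exact (hu i h).1
    · exact isOpen_univ
  have hWx : ∀ i, x i ∈ W i := by
    intro i; by_cases h : i ∈ I <;> simp only [hW, h, if_true, if_false]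
    · exact (hu i h).2
    · trivial
  have hWsub : Set.pi Set.univ W ⊆ (H : Set (∀ i, B i))ᶜ := by
    intro y hy
    apply husub
    intro i hi
    have h2 : y i ∈ (if i ∈ I then u i else Set.univ) := hy i (Set.mem_univ i)
    rwa [if_pos (Finset.mem_coe.mp hi)] at h2
  -- choose open normal subgroups
  have hUex : ∀ i, ∃ U : OpenNormalSubgroup (B i), ∀ g ∈ U.toSubgroup, x i * g ∈ W i := by
    intro i
    have hVopen : IsOpen ((fun g => x i * g) ⁻¹' W i) :=
      (hWopen i).preimage (continuous_mul_left (x i))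
    have hV1 : (1 : B i) ∈ (fun g => x i * g) ⁻¹' W i := by
      simp only [Set.mem_preimage, mul_one]; exact hWx i
    obtain ⟨C, hC, hC1, hCsub⟩ := compact_exists_isClopen_in_isOpen hVopen hV1
    obtain ⟨U, hU⟩ := IsTopologicalGroup.exist_openNormalSubgroup_sub_clopen_nhds_of_one hC hC1
    exact ⟨U, fun g hg => hCsub (hU hg)⟩
  choose U hU using hUex
  -- the quotient groups
  set Q : Fin n → Type := fun i => B i ⧸ (U i).toSubgroup with hQ
  haveI : ∀ i, Finite (Q i) := fun i =>
    Subgroup.quotient_finite_of_isOpen (U i).toSubgroup (U i).isOpen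
  set ψ : (∀ i, B i) →* (∀ i, Q i) :=
    MonoidHom.mk' (fun b i => QuotientGroup.mk' (U i).toSubgroup (b i))
      (fun a b => funext fun i => map_mul _ _ _) with hψ
  have hKtop : H.map ψ = ⊤ := by
    refine fin_goursat n Q ?_ (H.map ψ) ?_
    · intro i j hij Q' _ _ _ ⟨⟨f, hf⟩, ⟨g, hg⟩⟩
      letI : TopologicalSpace Q' := ⊥
      haveI : DiscreteTopology Q' := ⟨rfl⟩
      set f' : B i →* Q' := f.comp (QuotientGroup.mk' (U i).toSubgroup) with hf'
      set g' : B j →* Q' := g.comp (QuotientGroup.mk' (U j).toSubgroup) with hg'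
      have hfker : IsOpen (f'.ker : Set (B i)) := by
        refine Subgroup.isOpen_mono (H₁ := (U i).toSubgroup) ?_ (U i).isOpen
        intro a ha
        simp only [MonoidHom.mem_ker, hf', MonoidHom.comp_apply]
        rw [show (QuotientGroup.mk' (U i).toSubgroup) a = 1 from
          (QuotientGroup.eq_one_iff a).mpr ha, map_one]
      have hgker : IsOpen (g'.ker : Set (B j)) := by
        refine Subgroup.isOpen_mono (H₁ := (U j).toSubgroup) ?_ (U j).isOpen
        intro a ha
        simp only [MonoidHom.mem_ker, hg', MonoidHom.comp_apply]
        rw [show (QuotientGroup.mk' (U j).toSubgroup) a = 1 from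
          (QuotientGroup.eq_one_iff a).mpr ha, map_one]
      refine hsimple i j hij Q'
        ⟨⟨f', continuous_of_isOpen_ker f' hfker, hf.comp (QuotientGroup.mk'_surjective _)⟩,
         ⟨g', continuous_of_isOpen_ker g' hgker, hg.comp (QuotientGroup.mk'_surjective _)⟩⟩
    · intro j q
      obtain ⟨b, rfl⟩ := QuotientGroup.mk'_surjective (U j).toSubgroup q
      obtain ⟨h, hh⟩ := hproj j b
      refine ⟨⟨ψ h, Subgroup.mem_map_of_mem ψ h.2⟩, ?_⟩
      exact congrArg (QuotientGroup.mk' (U j).toSubgroup) hh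
  have hxmem : ψ x ∈ H.map ψ := hKtop.symm ▸ Subgroup.mem_top (ψ x)
  obtain ⟨h, hhH, hhx⟩ := hxmem
  have hmem : h ∈ Set.pi Set.univ W := by
    intro i _
    have hi : QuotientGroup.mk' (U i).toSubgroup (x i) =
        QuotientGroup.mk' (U i).toSubgroup (h i) := (congrFun hhx i).symm
    obtain ⟨z, hz, hzeq⟩ := (QuotientGroup.mk'_eq_mk' _).mp hi
    rw [← hzeq]
    exact hU i z hz
  exact hWsub hmem hhH
end

section
/- Special case of Goursat's lemma for two profinite groups: Let B₁ and B₂ be profinite groups having no finite simple group as a common continuous quotient. If H is a closed subgroup of B₁ × B₂ projecting surjectively onto each factor, then H = B₁ × B₂. -/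
theorem exists_simple_quot (G : Type) [Group G] [Finite G] [Nontrivial G] :
    ∃ M : Subgroup G, ∃ _ : M.Normal, IsSimpleGroup (G ⧸ M) := by
  classical
  set S : Set (Subgroup G) := {M | M.Normal ∧ M ≠ ⊤} with hS
  have hne : S.Nonempty := ⟨⊥, inferInstance, bot_ne_top⟩
  obtain ⟨M, hMS, hmax⟩ := S.toFinite.exists_maximal hne
  haveI hMn := hMS.1
  refine ⟨M, hMn, ?_⟩
  have hnontriv : Nontrivial (G ⧸ M) := by
    obtain ⟨x, hx⟩ := (Subgroup.eq_top_iff' M).not.mp hMS.2 |> not_forall.mp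
    exact ⟨QuotientGroup.mk x, 1, by simpa [QuotientGroup.eq_one_iff] using hx⟩
  refine ⟨fun N hN => ?_⟩
  set N' := N.comap (QuotientGroup.mk' M) with hN'
  have hNmap : N'.map (QuotientGroup.mk' M) = N :=
    Subgroup.map_comap_eq_self_of_surjective (QuotientGroup.mk'_surjective M) N
  haveI : N'.Normal := hN.comap _
  have hMle : M ≤ N' := fun x hx => by
    simp [hN', Subgroup.mem_comap, QuotientGroup.mk'_apply,
      (QuotientGroup.eq_one_iff x).mpr hx, one_mem]
  by_cases htop : N' = ⊤
  · right
    rw [← hNmap, htop]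
    exact Subgroup.map_top_of_surjective _ (QuotientGroup.mk'_surjective M)
  · left
    have : M = N' := le_antisymm hMle (hmax ⟨inferInstance, htop⟩ hMle)
    rw [← hNmap, ← this]
    exact (Subgroup.map_eq_bot_iff _).mpr (le_of_eq (QuotientGroup.ker_mk' M).symm)

theorem goursat_finite (F₁ F₂ : Type) [Group F₁] [Group F₂] [Finite F₁] [Finite F₂]
    (K : Subgroup (F₁ × F₂))
    (k1 : Function.Surjective fun h : K => (h : F₁ × F₂).1)
    (k2 : Function.Surjective fun h : K => (h : F₁ × F₂).2)
    (hK : K ≠ ⊤) :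
    ∃ (Q : Type) (_ : Group Q) (_ : Finite Q), IsSimpleGroup Q ∧
      (∃ f : F₁ →* Q, Function.Surjective f) ∧ (∃ g : F₂ →* Q, Function.Surjective g) := by
  classical
  set N₁ : Subgroup F₁ := K.comap (MonoidHom.inl F₁ F₂) with hN₁def
  have memN₁ : ∀ x : F₁, x ∈ N₁ ↔ ((x, 1) : F₁ × F₂) ∈ K := fun x => Iff.rfl
  haveI hN₁n : N₁.Normal := by
    constructor
    intro n hn g
    obtain ⟨⟨p, hp⟩, hpg⟩ := k1 g
    simp only at hpg
    have hmem : p * (n, 1) * p⁻¹ ∈ K := K.mul_mem (K.mul_mem hp ((memN₁ n).mp hn)) (K.inv_mem hp)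
    have heq : p * (n, 1) * p⁻¹ = ((g * n * g⁻¹, 1) : F₁ × F₂) := by
      cases p with
      | mk a c => simp_all [Prod.ext_iff, mul_assoc]
    rw [heq] at hmem
    exact (memN₁ _).mpr hmem
  have hN₁top : N₁ ≠ ⊤ := by
    intro h
    apply hK
    ext ⟨u, v⟩
    simp only [Subgroup.mem_top, iff_true]
    obtain ⟨⟨p, hp⟩, hpv⟩ := k2 v
    simp only at hpv
    have h1 : ((u * p.1⁻¹, 1) : F₁ × F₂) ∈ K := (memN₁ _).mp (h ▸ Subgroup.mem_top _)
    have : ((u * p.1⁻¹, 1) : F₁ × F₂) * p = (u, v) := by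
      cases p with
      | mk a c => simp_all [Prod.ext_iff, mul_assoc]
    exact this ▸ K.mul_mem h1 hp
  haveI : Nontrivial (F₁ ⧸ N₁) := by
    obtain ⟨x, hx⟩ := not_forall.mp ((Subgroup.eq_top_iff' N₁).not.mp hN₁top)
    exact ⟨QuotientGroup.mk x, 1, by simpa [QuotientGroup.eq_one_iff] using hx⟩
  obtain ⟨M, hMn, hsimp⟩ := exists_simple_quot (F₁ ⧸ N₁)
  set Q := (F₁ ⧸ N₁) ⧸ M with hQdef
  set φ : F₁ →* Q := (QuotientGroup.mk' M).comp (QuotientGroup.mk' N₁) with hφdef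
  have hφsurj : Function.Surjective φ :=
    (QuotientGroup.mk'_surjective M).comp (QuotientGroup.mk'_surjective N₁)
  have hN₁ker : ∀ x ∈ N₁, φ x = 1 := by
    intro x hx
    have h1 : (QuotientGroup.mk' N₁) x = 1 := (QuotientGroup.eq_one_iff x).mpr hx
    show (QuotientGroup.mk' M) ((QuotientGroup.mk' N₁) x) = 1
    rw [h1, map_one]
  set P : Subgroup (F₂ × Q) :=
    K.map ((MonoidHom.snd F₁ F₂).prod (φ.comp (MonoidHom.fst F₁ F₂))) with hPdef
  set π : P →* F₂ := (MonoidHom.fst F₂ Q).comp P.subtype with hπdef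
  have hπinj : Function.Injective π := by
    rw [injective_iff_map_eq_one]
    rintro ⟨⟨v, q⟩, hp⟩ h1
    have hv : v = 1 := h1
    obtain ⟨⟨u, v'⟩, huv, heq⟩ := hp
    simp only [MonoidHom.prod_apply, MonoidHom.coe_snd, MonoidHom.comp_apply,
      MonoidHom.coe_fst, Prod.mk.injEq] at heq
    have hq : q = 1 := by
      have hu : u ∈ N₁ := (memN₁ u).mpr (by rwa [heq.1, hv] at huv)
      rw [← heq.2]; exact hN₁ker u hu
    ext <;> simp [hv, hq]
  have hπsurj : Function.Surjective π := by
    intro v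
    obtain ⟨⟨p, hp⟩, hpv⟩ := k2 v
    simp only at hpv
    refine ⟨⟨(v, φ p.1), ⟨p, hp, by simp [hpv]⟩⟩, rfl⟩
  set e : P ≃* F₂ := MulEquiv.ofBijective π ⟨hπinj, hπsurj⟩ with hedef
  set ψ : F₂ →* Q := ((MonoidHom.snd F₂ Q).comp P.subtype).comp e.symm.toMonoidHom with hψdef
  have hψsurj : Function.Surjective ψ := by
    intro q
    obtain ⟨u, hu⟩ := hφsurj q
    obtain ⟨⟨p, hp⟩, hpu⟩ := k1 u
    simp only at hpu
    have hmem : ((p.2, q) : F₂ × Q) ∈ P := ⟨p, hp, by simp [hpu, hu]⟩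
    refine ⟨p.2, ?_⟩
    have : e.symm p.2 = ⟨(p.2, q), hmem⟩ := by
      apply e.injective
      simp [hedef]
      rfl
    simp [hψdef, this]
  exact ⟨Q, inferInstance, inferInstance, hsimp, ⟨φ, hφsurj⟩, ⟨ψ, hψsurj⟩⟩

/-- Goursat's lemma for two profinite groups: let `B₁` and `B₂` be
profinite groups having no finite simple group as a common continuous quotient.
If `H` is a closed subgroup of `B₁ × B₂` projecting surjectively onto each factor,
then `H = B₁ × B₂`. -/
theorem goursat_profinite_two
    (B₁ B₂ : Type) [Group B₁] [Group B₂]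
    [TopologicalSpace B₁] [IsTopologicalGroup B₁] [CompactSpace B₁] [T2Space B₁]
    [TotallyDisconnectedSpace B₁]
    [TopologicalSpace B₂] [IsTopologicalGroup B₂] [CompactSpace B₂] [T2Space B₂]
    [TotallyDisconnectedSpace B₂]
    (hsimple : ∀ (Q : Type) [Group Q] [Finite Q] [IsSimpleGroup Q] [TopologicalSpace Q] [DiscreteTopology Q],
      ¬ ((∃ f : B₁ →* Q, Continuous f ∧ Function.Surjective f) ∧
          (∃ g : B₂ →* Q, Continuous g ∧ Function.Surjective g)))
    (H : Subgroup (B₁ × B₂)) (hH : IsClosed (H : Set (B₁ × B₂)))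
    (h1 : Function.Surjective fun h : H => (h : B₁ × B₂).1)
    (h2 : Function.Surjective fun h : H => (h : B₁ × B₂).2) :
    H = ⊤ := by
  classical
  by_contra hne
  -- find an element of the form (b, 1) not in H
  obtain ⟨z, hz⟩ := not_forall.mp ((Subgroup.eq_top_iff' H).not.mp hne)
  obtain ⟨⟨p, hp⟩, hpz⟩ := h2 z.2
  simp only at hpz
  set b : B₁ := z.1 * p.1⁻¹ with hbdef
  have hb : ((b, 1) : B₁ × B₂) ∉ H := by
    intro hmem
    apply hz
    have : ((b, 1) : B₁ × B₂) * p = z := by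
      simp [hbdef, Prod.ext_iff, mul_assoc, hpz]
    exact this ▸ H.mul_mem hmem hp
  -- find an open normal subgroup W with (b,1) * W disjoint from H
  set U : Set (B₁ × B₂) := (fun w => ((b, 1) : B₁ × B₂) * w) ⁻¹' (↑H)ᶜ with hUdef
  have hUopen : IsOpen U := hH.isOpen_compl.preimage (continuous_mul_left _)
  have h1U : (1 : B₁ × B₂) ∈ U := by simpa [hUdef] using hb
  obtain ⟨V, hVclopen, h1V, hVU⟩ := compact_exists_isClopen_in_isOpen hUopen h1U
  obtain ⟨W, hW⟩ :=
    IsTopologicalGroup.exist_openNormalSubgroup_sub_clopen_nhds_of_one hVclopen h1V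
  have hWdisj : ∀ w ∈ W.toSubgroup, ((b, 1) : B₁ × B₂) * w ∉ H := fun w hw => hVU (hW hw)
  -- the two open normal subgroups
  set U₁ : Subgroup B₁ := W.toSubgroup.comap (MonoidHom.inl B₁ B₂) with hU₁def
  set U₂ : Subgroup B₂ := W.toSubgroup.comap (MonoidHom.inr B₁ B₂) with hU₂def
  have hU₁open : IsOpen (U₁ : Set B₁) := by
    have hc : Continuous (fun x : B₁ => ((x, 1) : B₁ × B₂)) := by continuity
    exact W.isOpen'.preimage hc
  have hU₂open : IsOpen (U₂ : Set B₂) := by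
    have hc : Continuous (fun x : B₂ => ((1, x) : B₁ × B₂)) := by continuity
    exact W.isOpen'.preimage hc
  haveI : U₁.Normal := Subgroup.Normal.comap W.isNormal' _
  haveI : U₂.Normal := Subgroup.Normal.comap W.isNormal' _
  haveI : Finite (B₁ ⧸ U₁) := Subgroup.quotient_finite_of_isOpen U₁ hU₁open
  haveI : Finite (B₂ ⧸ U₂) := Subgroup.quotient_finite_of_isOpen U₂ hU₂open
  haveI : DiscreteTopology (B₁ ⧸ U₁) := QuotientGroup.discreteTopology hU₁open
  haveI : DiscreteTopology (B₂ ⧸ U₂) := QuotientGroup.discreteTopology hU₂open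
  set ρ : B₁ × B₂ →* (B₁ ⧸ U₁) × (B₂ ⧸ U₂) :=
    (QuotientGroup.mk' U₁).prodMap (QuotientGroup.mk' U₂) with hρdef
  set K : Subgroup ((B₁ ⧸ U₁) × (B₂ ⧸ U₂)) := H.map ρ with hKdef
  have k1 : Function.Surjective fun h : K => (h : (B₁ ⧸ U₁) × (B₂ ⧸ U₂)).1 := by
    intro q
    obtain ⟨u, hu⟩ := QuotientGroup.mk'_surjective U₁ q
    obtain ⟨⟨h, hh⟩, hh1⟩ := h1 u
    simp only at hh1
    refine ⟨⟨ρ h, ⟨h, hh, rfl⟩⟩, ?_⟩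
    show (QuotientGroup.mk' U₁) h.1 = q
    rw [hh1]; exact hu
  have k2 : Function.Surjective fun h : K => (h : (B₁ ⧸ U₁) × (B₂ ⧸ U₂)).2 := by
    intro q
    obtain ⟨u, hu⟩ := QuotientGroup.mk'_surjective U₂ q
    obtain ⟨⟨h, hh⟩, hh1⟩ := h2 u
    simp only at hh1
    refine ⟨⟨ρ h, ⟨h, hh, rfl⟩⟩, ?_⟩
    show (QuotientGroup.mk' U₂) h.2 = q
    rw [hh1]; exact hu
  have hKtop : K ≠ ⊤ := by
    intro htop
    have hmem : ((QuotientGroup.mk b, 1) : (B₁ ⧸ U₁) × (B₂ ⧸ U₂)) ∈ K :=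
      htop ▸ Subgroup.mem_top _
    obtain ⟨⟨x, y⟩, hxy, heq⟩ := hmem
    have heq1 : (QuotientGroup.mk b : B₁ ⧸ U₁) = QuotientGroup.mk x :=
      (congrArg Prod.fst heq).symm
    have heq2 : (QuotientGroup.mk' U₂) y = 1 := congrArg Prod.snd heq
    have hx : b⁻¹ * x ∈ U₁ := QuotientGroup.eq.mp heq1
    have hy : y ∈ U₂ := (QuotientGroup.eq_one_iff y).mp heq2
    have hxyW : ((b⁻¹ * x, y) : B₁ × B₂) ∈ W.toSubgroup := by
      have h1' : ((b⁻¹ * x, 1) : B₁ × B₂) ∈ W.toSubgroup := hx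
      have h2' : ((1, y) : B₁ × B₂) ∈ W.toSubgroup := hy
      simpa using W.toSubgroup.mul_mem h1' h2'
    have := hWdisj _ hxyW
    apply this
    have : ((b, 1) : B₁ × B₂) * (b⁻¹ * x, y) = (x, y) := by
      simp [Prod.ext_iff, mul_assoc]
    rw [this]
    exact hxy
  obtain ⟨Q, _, _, hQsimp, ⟨f', hf'⟩, ⟨g', hg'⟩⟩ :=
    goursat_finite (B₁ ⧸ U₁) (B₂ ⧸ U₂) K k1 k2 hKtop
  letI : TopologicalSpace Q := ⊥
  haveI : DiscreteTopology Q := ⟨rfl⟩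
  haveI := hQsimp
  refine hsimple Q ⟨⟨f'.comp (QuotientGroup.mk' U₁), ?_, hf'.comp (QuotientGroup.mk'_surjective U₁)⟩,
    ⟨g'.comp (QuotientGroup.mk' U₂), ?_, hg'.comp (QuotientGroup.mk'_surjective U₂)⟩⟩
  · show Continuous (⇑f' ∘ ⇑(QuotientGroup.mk' U₁))
    exact continuous_of_discreteTopology.comp QuotientGroup.continuous_mk
  · show Continuous (⇑g' ∘ ⇑(QuotientGroup.mk' U₂))
    exact continuous_of_discreteTopology.comp QuotientGroup.continuous_mk
end

section
/- For any prime power q > 1, the commutator subgroup of the principal congruence subgroup I + q·M₂(ℤ_ℓ) of GL₂(ℤ_ℓ) (where q = ℓᵉ) equals SL₂(ℤ_ℓ) ∩ (I + q²·M₂(ℤ_ℓ)). -/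
open Matrix

/-- The principal congruence subgroup `{A ∈ GL₂(ℤ_ℓ) : A ≡ I (mod ℓᵉ)}`, i.e. the
kernel of reduction modulo `ℓᵉ`. -/
noncomputable def congruenceSubgroup (ℓ : ℕ) [Fact ℓ.Prime] (e : ℕ) :
    Subgroup (GL (Fin 2) ℤ_[ℓ]) :=
  (Matrix.GeneralLinearGroup.map (PadicInt.toZModPow (p := ℓ) e)).ker

namespace CommCongAux

variable {ℓ : ℕ} [Fact ℓ.Prime]

open scoped commutatorElement

local notation "M2" => Matrix (Fin 2) (Fin 2) ℤ_[ℓ]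
local notation "pp" => ((ℓ : ℤ_[ℓ]))

/-! ### Membership in the congruence subgroup -/

lemma matrix_dvd_iff (c : ℤ_[ℓ]) (U : M2) :
    (∀ i j, c ∣ U i j) ↔ ∃ B : M2, U = c • B := by
  constructor
  · intro h
    refine ⟨Matrix.of fun i j => (h i j).choose, ?_⟩
    ext i j
    simpa [Matrix.smul_apply] using (h i j).choose_spec
  · rintro ⟨B, rfl⟩ i j
    exact ⟨B i j, by simp [Matrix.smul_apply]⟩

lemma toZModPow_eq_iff (n : ℕ) (x y : ℤ_[ℓ]) :
    PadicInt.toZModPow (p := ℓ) n x = PadicInt.toZModPow (p := ℓ) n y ↔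
      (ℓ : ℤ_[ℓ]) ^ n ∣ x - y := by
  rw [← sub_eq_zero, ← map_sub, ← RingHom.mem_ker, PadicInt.ker_toZModPow,
    Ideal.mem_span_singleton]

lemma mem_congruenceSubgroup_iff {n : ℕ} {A : GL (Fin 2) ℤ_[ℓ]} :
    A ∈ congruenceSubgroup ℓ n ↔
      ∃ B : M2, (A : M2) = 1 + ((ℓ : ℤ_[ℓ]) ^ n) • B := by
  have h1 : A ∈ congruenceSubgroup ℓ n ↔
      ∀ i j, PadicInt.toZModPow (p := ℓ) n ((A : M2) i j) =
        PadicInt.toZModPow (p := ℓ) n ((1 : M2) i j) := by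
    rw [congruenceSubgroup, MonoidHom.mem_ker, Units.ext_iff, ← Matrix.ext_iff]
    constructor
    · intro h i j
      have := h i j
      simpa [Matrix.GeneralLinearGroup.map, RingHom.mapMatrix_apply, Matrix.map_apply,
        Matrix.one_apply, apply_ite] using this
    · intro h i j
      have := h i j
      simpa [Matrix.GeneralLinearGroup.map, RingHom.mapMatrix_apply, Matrix.map_apply,
        Matrix.one_apply, apply_ite] using this
  rw [h1]
  have h2 : (∀ i j, PadicInt.toZModPow (p := ℓ) n ((A : M2) i j) =
        PadicInt.toZModPow (p := ℓ) n ((1 : M2) i j)) ↔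
      ∀ i j, (ℓ : ℤ_[ℓ]) ^ n ∣ ((A : M2) - 1) i j := by
    simp only [toZModPow_eq_iff, Matrix.sub_apply]
  rw [h2, matrix_dvd_iff]
  constructor
  · rintro ⟨B, hB⟩; exact ⟨B, by rw [← hB]; abel⟩
  · rintro ⟨B, hB⟩; exact ⟨B, by rw [hB]; abel⟩


lemma mem_congruenceSubgroup_iff_norm {n : ℕ} {A : GL (Fin 2) ℤ_[ℓ]} :
    A ∈ congruenceSubgroup ℓ n ↔
      ∀ i j, ‖((A : M2) - 1) i j‖ ≤ (ℓ : ℝ) ^ (-(n : ℤ)) := by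
  rw [mem_congruenceSubgroup_iff]
  constructor
  · rintro ⟨B, hB⟩ i j
    have h0 : ((A : M2) - 1) i j = (ℓ : ℤ_[ℓ]) ^ n * B i j := by
      rw [hB]
      simp [Matrix.add_apply, Matrix.sub_apply, Matrix.smul_apply, smul_eq_mul]
    rw [h0, PadicInt.norm_le_pow_iff_mem_span_pow, Ideal.mem_span_singleton]
    exact ⟨B i j, rfl⟩
  · intro h
    have h' : ∀ i j, (ℓ : ℤ_[ℓ]) ^ n ∣ ((A : M2) - 1) i j := by
      intro i j
      have h1 := h i j
      rw [PadicInt.norm_le_pow_iff_mem_span_pow, Ideal.mem_span_singleton] at h1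
      exact h1
    obtain ⟨B, hB⟩ := (matrix_dvd_iff _ _).mp h'
    exact ⟨B, by rw [← hB]; abel⟩

/-! ### Algebraic congruence computations -/

lemma inv_cong {x : GL (Fin 2) ℤ_[ℓ]} {c : ℤ_[ℓ]} {A : M2}
    (hx : (x : M2) = 1 + c • A) :
    ∃ A' : M2, ((x⁻¹ : GL (Fin 2) ℤ_[ℓ]) : M2) = 1 + c • A' := by
  refine ⟨-(((x⁻¹ : GL (Fin 2) ℤ_[ℓ]) : M2) * A), ?_⟩
  have h : ((x⁻¹ : GL (Fin 2) ℤ_[ℓ]) : M2) * (x : M2) = 1 := x.inv_mul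
  rw [hx, mul_add, mul_one, mul_smul_comm] at h
  rw [smul_neg, ← sub_eq_add_neg]
  exact eq_sub_of_add_eq h

lemma commutator_cong {x y : GL (Fin 2) ℤ_[ℓ]} {a b : ℕ} {A B : M2}
    (hx : (x : M2) = 1 + (pp ^ (a + 1)) • A) (hy : (y : M2) = 1 + (pp ^ (b + 1)) • B) :
    ∃ E : M2, ((⁅x, y⁆ : GL (Fin 2) ℤ_[ℓ]) : M2)
      = 1 + (pp ^ (a + b + 2)) • (A * B - B * A) + (pp ^ (a + b + 3)) • E := by
  obtain ⟨A', hA'⟩ := inv_cong hx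
  obtain ⟨B', hB'⟩ := inv_cong hy
  set u : M2 := (x : M2)
  set v : M2 := (y : M2)
  set u' : M2 := ((x⁻¹ : GL (Fin 2) ℤ_[ℓ]) : M2)
  set v' : M2 := ((y⁻¹ : GL (Fin 2) ℤ_[ℓ]) : M2)
  have hcomm : ((⁅x, y⁆ : GL (Fin 2) ℤ_[ℓ]) : M2) = 1 + (u * v - v * u) * (u' * v') := by
    have h1 : v * u * (u' * v') = 1 := by
      have := Units.mul_inv (y * x)
      rwa [_root_.mul_inv_rev, Units.val_mul, Units.val_mul] at this
    have h2 : ((⁅x, y⁆ : GL (Fin 2) ℤ_[ℓ]) : M2) = u * v * (u' * v') := by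
      show ((x * y * x⁻¹ * y⁻¹ : GL (Fin 2) ℤ_[ℓ]) : M2) = _
      simp only [Units.val_mul, mul_assoc]
      rfl
    rw [h2]
    have h3 : u * v * (u' * v') = v * u * (u' * v') + (u * v - v * u) * (u' * v') := by
      noncomm_ring
    rw [h3, h1, add_comm]
  have hdiff : u * v - v * u = (pp ^ (a + b + 2)) • (A * B - B * A) := by
    rw [hx, hy]
    simp only [mul_add, add_mul, one_mul, mul_one, smul_mul_smul_comm]
    module
  have hW : u' * v' = 1 + pp • (pp ^ a • A' + pp ^ b • B' + pp ^ (a + b + 1) • (A' * B')) := by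
    rw [hA', hB']
    simp only [mul_add, add_mul, one_mul, mul_one, smul_mul_smul_comm, smul_add, smul_smul]
    module
  refine ⟨(A * B - B * A) * (pp ^ a • A' + pp ^ b • B' + pp ^ (a + b + 1) • (A' * B')), ?_⟩
  rw [hcomm, hdiff, hW]
  simp only [mul_add, mul_one, smul_mul_assoc, mul_smul_comm, smul_smul]
  module

lemma mul_approx {u v : M2} {m : ℕ} {D₁ D₂ F₁ F₂ : M2}
    (hu : u = 1 + (pp ^ (m + 1)) • D₁ + (pp ^ (m + 2)) • F₁)
    (hv : v = 1 + (pp ^ (m + 1)) • D₂ + (pp ^ (m + 2)) • F₂) :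
    ∃ F : M2, u * v = 1 + (pp ^ (m + 1)) • (D₁ + D₂) + (pp ^ (m + 2)) • F := by
  refine ⟨F₁ + F₂ + pp ^ m • (D₁ * D₂) + pp ^ (m + 1) • (D₁ * F₂)
    + pp ^ (m + 1) • (F₁ * D₂) + pp ^ (m + 2) • (F₁ * F₂), ?_⟩
  rw [hu, hv]
  simp only [mul_add, add_mul, one_mul, mul_one, smul_mul_smul_comm, smul_add, smul_smul]
  module

/-! ### Determinant facts -/

lemma entry_one_add_smul (c : ℤ_[ℓ]) (A : M2) (i j : Fin 2) :
    ((1 : M2) + c • A) i j = (if i = j then 1 else 0) + c * A i j := by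
  simp [Matrix.add_apply, Matrix.one_apply, Matrix.smul_apply, smul_eq_mul]

lemma det_one_add_smul' (c : ℤ_[ℓ]) (A : M2) :
    det ((1 : M2) + c • A) =
      1 + c * (A 0 0 + A 1 1) + c ^ 2 * (A 0 0 * A 1 1 - A 0 1 * A 1 0) := by
  rw [Matrix.det_fin_two]
  simp only [entry_one_add_smul]
  norm_num
  ring

lemma isUnit_one_add_smul (m : ℕ) (A : M2) : IsUnit ((1 : M2) + (pp ^ (m + 1)) • A) := by
  rw [Matrix.isUnit_iff_isUnit_det, det_one_add_smul']
  set z : ℤ_[ℓ] := pp ^ (m + 1) * (A 0 0 + A 1 1) + (pp ^ (m + 1)) ^ 2 * (A 0 0 * A 1 1 - A 0 1 * A 1 0) with hz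
  have h1 : (1 : ℤ_[ℓ]) + pp ^ (m + 1) * (A 0 0 + A 1 1)
      + (pp ^ (m + 1)) ^ 2 * (A 0 0 * A 1 1 - A 0 1 * A 1 0) = 1 + z := by rw [hz]; ring
  rw [h1, PadicInt.isUnit_iff]
  have hzlt : ‖z‖ < 1 := by
    have h2 : z = pp * (pp ^ m * (A 0 0 + A 1 1) + pp ^ m * pp ^ (m + 1) * (A 0 0 * A 1 1 - A 0 1 * A 1 0)) := by
      rw [hz]; ring
    have hle : ‖z‖ ≤ ‖(pp : ℤ_[ℓ])‖ := by
      rw [h2, norm_mul]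
      exact mul_le_of_le_one_right (norm_nonneg _) (PadicInt.norm_le_one _)
    have hplt : ‖(pp : ℤ_[ℓ])‖ < 1 := by
      rw [PadicInt.norm_p]
      have hl1 : (1 : ℝ) < ℓ := by exact_mod_cast (Fact.out : ℓ.Prime).one_lt
      exact inv_lt_one_of_one_lt₀ hl1
    exact lt_of_le_of_lt hle hplt
  have hne : ‖(1 : ℤ_[ℓ])‖ ≠ ‖z‖ := by rw [norm_one]; exact (ne_of_lt hzlt).symm
  rw [PadicInt.norm_add_eq_max_of_ne hne, norm_one]
  exact max_eq_left (le_of_lt hzlt)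

lemma trace_small {m : ℕ} {C : M2} (hdet : det ((1 : M2) + (pp ^ (m + 1)) • C) = 1) :
    ∃ t : ℤ_[ℓ], C 0 0 + C 1 1 = pp * t := by
  rw [det_one_add_smul'] at hdet
  refine ⟨-(pp ^ m * (C 0 0 * C 1 1 - C 0 1 * C 1 0)), ?_⟩
  have hp : (pp : ℤ_[ℓ]) ^ (m + 1) ≠ 0 := by
    apply pow_ne_zero
    exact_mod_cast Nat.cast_ne_zero.mpr (Fact.out : ℓ.Prime).ne_zero
  have h0 : pp ^ (m + 1) * (C 0 0 + C 1 1 - pp * -(pp ^ m * (C 0 0 * C 1 1 - C 0 1 * C 1 0))) = 0 := by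
    linear_combination hdet
  rcases mul_eq_zero.mp h0 with h | h
  · exact absurd h hp
  · exact sub_eq_zero.mp h

lemma decomp {C : M2} {t : ℤ_[ℓ]} (ht : C 0 0 + C 1 1 = pp * t) :
    ∃ A₁ B₁ A₂ B₂ A₃ B₃ R : M2,
      C = (A₁ * B₁ - B₁ * A₁) + (A₂ * B₂ - B₂ * A₂) + (A₃ * B₃ - B₃ * A₃) + pp • R := by
  refine ⟨!![0,1;0,0], !![0,0;C 0 0,0], !![1,0;0,0], !![0,C 0 1;0,0],
    !![0,0;C 1 0,0], !![1,0;0,0], !![0,0;0,t], ?_⟩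
  ext i j
  fin_cases i <;> fin_cases j <;>
    simp [Matrix.mul_apply, Fin.sum_univ_two, Matrix.smul_apply, smul_eq_mul] <;>
    linear_combination ht

/-! ### The commutator subgroup is contained in the determinant kernel -/

lemma commutator_le_ker_det (n : ℕ) :
    ⁅congruenceSubgroup ℓ n, congruenceSubgroup ℓ n⁆ ≤
      (Matrix.GeneralLinearGroup.det (n := Fin 2) (R := ℤ_[ℓ])).ker := by
  rw [Subgroup.commutator_le]
  intro x _ y _
  rw [MonoidHom.mem_ker, map_commutatorElement]
  rw [commutatorElement_def]
  rw [mul_inv_eq_one]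
  rw [mul_inv_eq_iff_eq_mul]
  exact mul_comm _ _

/-! ### The approximation step -/

lemma step {e' k : ℕ} (g : GL (Fin 2) ℤ_[ℓ]) (hdet : det (g : M2) = 1)
    (hg : ∃ C : M2, (g : M2) = 1 + (pp ^ (2 * e' + k + 2)) • C) :
    ∃ c ∈ ⁅congruenceSubgroup ℓ (e' + 1), congruenceSubgroup ℓ (e' + 1)⁆,
      ∃ C' : M2, ((c⁻¹ * g : GL (Fin 2) ℤ_[ℓ]) : M2) = 1 + (pp ^ (2 * e' + k + 3)) • C' := by
  obtain ⟨C, hC⟩ := hg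
  have hC' : (g : M2) = 1 + (pp ^ ((2 * e' + k + 1) + 1)) • C := by
    rw [hC]
  have hdet' : det ((1 : M2) + (pp ^ ((2 * e' + k + 1) + 1)) • C) = 1 := by
    rw [← hC']; exact hdet
  obtain ⟨t, ht⟩ := trace_small hdet'
  obtain ⟨A₁, B₁, A₂, B₂, A₃, B₃, R, hR⟩ := decomp ht
  -- build the commutators
  set m : ℕ := 2 * e' + k + 1 with hm
  have build : ∀ (A B : M2), ∃ c ∈ ⁅congruenceSubgroup ℓ (e' + 1), congruenceSubgroup ℓ (e' + 1)⁆,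
      ∃ E : M2, (c : M2) = 1 + (pp ^ (m + 1)) • (A * B - B * A) + (pp ^ (m + 2)) • E := by
    intro A B
    have hxu := (isUnit_one_add_smul e' A)
    have hyu := (isUnit_one_add_smul (e' + k) B)
    set x := hxu.unit with hxdef
    set y := hyu.unit with hydef
    have hxv : (x : M2) = 1 + (pp ^ (e' + 1)) • A := hxu.unit_spec
    have hyv : (y : M2) = 1 + (pp ^ ((e' + k) + 1)) • B := hyu.unit_spec
    have hxmem : x ∈ congruenceSubgroup ℓ (e' + 1) :=
      mem_congruenceSubgroup_iff.mpr ⟨A, hxv⟩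
    have hymem : y ∈ congruenceSubgroup ℓ (e' + 1) := by
      refine mem_congruenceSubgroup_iff.mpr ⟨pp ^ k • B, ?_⟩
      rw [hyv, smul_smul, ← pow_add, show e' + 1 + k = e' + k + 1 by omega]
    obtain ⟨E, hE⟩ := commutator_cong (a := e') (b := e' + k) hxv hyv
    refine ⟨⁅x, y⁆, Subgroup.commutator_mem_commutator hxmem hymem, E, ?_⟩
    rw [hE, show e' + (e' + k) + 2 = m + 1 by omega, show e' + (e' + k) + 3 = m + 2 by omega]
  obtain ⟨c₁, hc₁mem, E₁, hE₁⟩ := build A₁ B₁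
  obtain ⟨c₂, hc₂mem, E₂, hE₂⟩ := build A₂ B₂
  obtain ⟨c₃, hc₃mem, E₃, hE₃⟩ := build A₃ B₃
  set c : GL (Fin 2) ℤ_[ℓ] := c₁ * (c₂ * c₃) with hcdef
  have hcmem : c ∈ ⁅congruenceSubgroup ℓ (e' + 1), congruenceSubgroup ℓ (e' + 1)⁆ :=
    mul_mem hc₁mem (mul_mem hc₂mem hc₃mem)
  obtain ⟨F₂₃, hF₂₃⟩ := mul_approx hE₂ hE₃
  have hc₂₃ : ((c₂ * c₃ : GL (Fin 2) ℤ_[ℓ]) : M2)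
      = 1 + (pp ^ (m + 1)) • ((A₂ * B₂ - B₂ * A₂) + (A₃ * B₃ - B₃ * A₃)) + (pp ^ (m + 2)) • F₂₃ := by
    rw [Units.val_mul]; exact hF₂₃
  obtain ⟨F, hF⟩ := mul_approx hE₁ hc₂₃
  have hcv : (c : M2) = 1 + (pp ^ (m + 1)) •
      ((A₁ * B₁ - B₁ * A₁) + ((A₂ * B₂ - B₂ * A₂) + (A₃ * B₃ - B₃ * A₃))) + (pp ^ (m + 2)) • F := by
    rw [hcdef, Units.val_mul]; exact hF
  -- now compute c⁻¹ * g
  have hsub : (g : M2) - (c : M2) = (pp ^ (m + 2)) • (R - F) := by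
    rw [hC', hcv, hR]
    simp only [smul_add, smul_sub, smul_smul]
    module
  refine ⟨c, hcmem, ((c⁻¹ : GL (Fin 2) ℤ_[ℓ]) : M2) * (R - F), ?_⟩
  have key : ((c⁻¹ * g : GL (Fin 2) ℤ_[ℓ]) : M2)
      = 1 + ((c⁻¹ : GL (Fin 2) ℤ_[ℓ]) : M2) * ((g : M2) - (c : M2)) := by
    rw [Units.val_mul, mul_sub]
    rw [c.inv_mul]
    abel
  rw [key, hsub, mul_smul_comm, show 2 * e' + k + 3 = m + 2 by omega]

lemma approx_all {e' : ℕ} (k : ℕ) :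
    ∀ g : GL (Fin 2) ℤ_[ℓ], det (g : M2) = 1 →
      (∃ C : M2, (g : M2) = 1 + (pp ^ (2 * e' + 2)) • C) →
      ∃ h ∈ ⁅congruenceSubgroup ℓ (e' + 1), congruenceSubgroup ℓ (e' + 1)⁆,
        ∃ C' : M2, ((h * g : GL (Fin 2) ℤ_[ℓ]) : M2) = 1 + (pp ^ (2 * e' + k + 2)) • C' := by
  induction k with
  | zero =>
    intro g _ ⟨C, hC⟩
    exact ⟨1, one_mem _, C, by rw [one_mul]; exact hC⟩
  | succ k ih =>
    intro g hdet hg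
    obtain ⟨h, hhmem, C', hC'⟩ := ih g hdet hg
    have hdet2 : det ((h * g : GL (Fin 2) ℤ_[ℓ]) : M2) = 1 := by
      have hh : Matrix.GeneralLinearGroup.det (h * g) = 1 := by
        rw [_root_.map_mul]
        have h1 : Matrix.GeneralLinearGroup.det h = 1 :=
          MonoidHom.mem_ker.mp (commutator_le_ker_det (e' + 1) hhmem)
        have h2 : Matrix.GeneralLinearGroup.det g = 1 := by
          apply Units.ext
          simpa using hdet
        rw [h1, h2, one_mul]
      have := congrArg (Units.val) hh
      simpa using this
    obtain ⟨c, hcmem, C'', hC''⟩ := step (h * g) hdet2 ⟨C', hC'⟩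
    refine ⟨c⁻¹ * h, mul_mem (inv_mem hcmem) hhmem, C'', ?_⟩
    rw [show (c⁻¹ * h) * g = c⁻¹ * (h * g) by group]
    rw [hC'', show 2 * e' + k + 3 = 2 * e' + (k + 1) + 2 by omega]

/-! ### Topology helpers -/

lemma entry_norm_le {u : M2} {n : ℕ} (h : ∃ C : M2, u = 1 + (pp ^ n) • C) (i j : Fin 2) :
    ‖(u - 1) i j‖ ≤ ((ℓ : ℝ)⁻¹) ^ n := by
  obtain ⟨C, rfl⟩ := h
  have : ((1 : M2) + (pp ^ n) • C - 1) i j = pp ^ n * C i j := by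
    simp [Matrix.add_apply, Matrix.sub_apply, Matrix.smul_apply, smul_eq_mul]
  rw [this, norm_mul]
  have h1 : ‖(pp : ℤ_[ℓ]) ^ n‖ = ((ℓ : ℝ)⁻¹) ^ n := by
    rw [PadicInt.norm_p_pow]
    rw [_root_.zpow_neg, zpow_natCast, inv_pow]
  rw [h1]
  exact mul_le_of_le_one_right (by positivity) (PadicInt.norm_le_one _)

lemma tendsto_val_one_of_level {r : ℕ → GL (Fin 2) ℤ_[ℓ]} {N : ℕ}
    (h : ∀ k, ∃ C : M2, ((r k : GL (Fin 2) ℤ_[ℓ]) : M2) = 1 + (pp ^ (N + k)) • C) :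
    Filter.Tendsto (fun k => ((r k : GL (Fin 2) ℤ_[ℓ]) : M2)) Filter.atTop (nhds 1) := by
  have hsub : Filter.Tendsto (fun k => ((r k : GL (Fin 2) ℤ_[ℓ]) : M2) - 1)
      Filter.atTop (nhds 0) := by
    refine tendsto_pi_nhds.mpr ?_
    intro i
    rw [tendsto_pi_nhds]
    intro j
    have h0 : ∀ k, ‖(((r k : GL (Fin 2) ℤ_[ℓ]) : M2) - 1) i j‖ ≤ ((ℓ : ℝ)⁻¹) ^ (N + k) :=
      fun k => entry_norm_le (h k) i j
    have hgeo : Filter.Tendsto (fun k : ℕ => ((ℓ : ℝ)⁻¹) ^ (N + k)) Filter.atTop (nhds 0) := by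
      have hlt : (ℓ : ℝ)⁻¹ < 1 := by
        rw [inv_lt_one_iff₀]
        right
        exact_mod_cast (Fact.out : ℓ.Prime).one_lt
      have hpos : (0 : ℝ) ≤ (ℓ : ℝ)⁻¹ := by positivity
      have hbase := tendsto_pow_atTop_nhds_zero_of_lt_one hpos hlt
      have hmul := hbase.const_mul (((ℓ : ℝ)⁻¹) ^ N)
      rw [mul_zero] at hmul
      have heq : (fun k : ℕ => ((ℓ : ℝ)⁻¹) ^ (N + k))
          = fun k : ℕ => ((ℓ : ℝ)⁻¹) ^ N * ((ℓ : ℝ)⁻¹) ^ k := by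
        funext k; rw [pow_add]
      rw [heq]
      exact hmul
    have happ : Filter.Tendsto (fun k => ((((r k : GL (Fin 2) ℤ_[ℓ]) : M2) - 1)) i j)
        Filter.atTop (nhds 0) := squeeze_zero_norm h0 hgeo
    simpa using happ
  have h2 := hsub.add_const (1 : M2)
  simpa using h2

lemma tendsto_units_of {f : ℕ → GL (Fin 2) ℤ_[ℓ]} {u : GL (Fin 2) ℤ_[ℓ]}
    (h1 : Filter.Tendsto (fun k => ((f k : GL (Fin 2) ℤ_[ℓ]) : M2)) Filter.atTop (nhds (u : M2)))
    (h2 : Filter.Tendsto (fun k => (((f k)⁻¹ : GL (Fin 2) ℤ_[ℓ]) : M2)) Filter.atTop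
      (nhds ((u⁻¹ : GL (Fin 2) ℤ_[ℓ]) : M2))) :
    Filter.Tendsto f Filter.atTop (nhds u) := by
  rw [Units.isInducing_embedProduct.tendsto_nhds_iff]
  exact h1.prodMk_nhds ((MulOpposite.continuous_op.tendsto _).comp h2)

end CommCongAux

open CommCongAux in
/-- for a prime power `q = ℓᵉ > 1`, the closed commutator subgroup of
`I + q·M₂(ℤ_ℓ)` equals `SL₂(ℤ_ℓ) ∩ (I + q²·M₂(ℤ_ℓ))`. -/
theorem commutator_congruenceSubgroup (ℓ : ℕ) [Fact ℓ.Prime] (e : ℕ) (he : 1 ≤ e) :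
    (⁅congruenceSubgroup ℓ e, congruenceSubgroup ℓ e⁆ :
        Subgroup (GL (Fin 2) ℤ_[ℓ])).topologicalClosure
      = (Matrix.GeneralLinearGroup.det (n := Fin 2) (R := ℤ_[ℓ])).ker ⊓
          congruenceSubgroup ℓ (2 * e) := by
  obtain ⟨e', rfl⟩ : ∃ e', e = e' + 1 := ⟨e - 1, by omega⟩
  apply le_antisymm
  · -- forward inclusion
    apply Subgroup.topologicalClosure_minimal
    · rw [Subgroup.commutator_le]
      intro x hx y hy
      obtain ⟨A, hA⟩ := mem_congruenceSubgroup_iff.mp hx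
      obtain ⟨B, hB⟩ := mem_congruenceSubgroup_iff.mp hy
      obtain ⟨E, hE⟩ := commutator_cong (a := e') (b := e') hA hB
      constructor
      · exact commutator_le_ker_det (e' + 1) (Subgroup.commutator_mem_commutator hx hy)
      · refine mem_congruenceSubgroup_iff.mpr ⟨(A * B - B * A) + ((ℓ : ℤ_[ℓ])) • E, ?_⟩
        rw [hE]
        simp only [smul_add, smul_smul, ← pow_succ]
        rw [show 2 * (e' + 1) = e' + e' + 2 by omega]
        module
    · -- RHS is closed
      show IsClosed (((Matrix.GeneralLinearGroup.det (n := Fin 2) (R := ℤ_[ℓ])).ker ⊓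
          congruenceSubgroup ℓ (2 * (e' + 1)) : Subgroup (GL (Fin 2) ℤ_[ℓ])) :
            Set (GL (Fin 2) ℤ_[ℓ]))
      rw [Subgroup.coe_inf]
      apply IsClosed.inter
      · have hset : ((Matrix.GeneralLinearGroup.det (n := Fin 2) (R := ℤ_[ℓ])).ker :
            Set (GL (Fin 2) ℤ_[ℓ]))
            = (fun A : GL (Fin 2) ℤ_[ℓ] => det ((A : Matrix (Fin 2) (Fin 2) ℤ_[ℓ]))) ⁻¹' {1} := by
          ext A
          simp only [SetLike.mem_coe, MonoidHom.mem_ker, Set.mem_preimage, Set.mem_singleton_iff]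
          rw [Units.ext_iff]
          simp [Matrix.GeneralLinearGroup.det]
        rw [hset]
        exact IsClosed.preimage (Units.continuous_val.matrix_det) isClosed_singleton
      · have hset : ((congruenceSubgroup ℓ (2 * (e' + 1))) : Set (GL (Fin 2) ℤ_[ℓ]))
            = ⋂ i, ⋂ j, {A : GL (Fin 2) ℤ_[ℓ] |
              ‖(((A : Matrix (Fin 2) (Fin 2) ℤ_[ℓ])) - 1) i j‖
                ≤ (ℓ : ℝ) ^ (-(2 * (e' + 1) : ℕ) : ℤ)} := by
          ext A
          simp only [SetLike.mem_coe, Set.mem_iInter, Set.mem_setOf_eq]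
          exact mem_congruenceSubgroup_iff_norm
        rw [hset]
        refine isClosed_iInter fun i => isClosed_iInter fun j => ?_
        have hcont : Continuous (fun A : GL (Fin 2) ℤ_[ℓ] =>
            ‖(((A : Matrix (Fin 2) (Fin 2) ℤ_[ℓ])) - 1) i j‖) :=
          ((Units.continuous_val.sub continuous_const).matrix_elem i j).norm
        exact isClosed_le hcont continuous_const
  · -- reverse inclusion
    intro g hg
    obtain ⟨hgdet, hgcong⟩ := hg
    have hdet : det ((g : GL (Fin 2) ℤ_[ℓ]) : Matrix (Fin 2) (Fin 2) ℤ_[ℓ]) = 1 := by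
      have := MonoidHom.mem_ker.mp hgdet
      have h2 := congrArg Units.val this
      simpa [Matrix.GeneralLinearGroup.det] using h2
    obtain ⟨C₀, hC₀⟩ := mem_congruenceSubgroup_iff.mp hgcong
    have hC₀' : ((g : GL (Fin 2) ℤ_[ℓ]) : Matrix (Fin 2) (Fin 2) ℤ_[ℓ])
        = 1 + ((ℓ : ℤ_[ℓ]) ^ (2 * e' + 2)) • C₀ := by
      rw [hC₀, show 2 * (e' + 1) = 2 * e' + 2 by omega]
    -- choose approximating sequence
    have hseq : ∀ k : ℕ, ∃ h ∈ ⁅congruenceSubgroup ℓ (e' + 1), congruenceSubgroup ℓ (e' + 1)⁆,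
        ∃ C' : Matrix (Fin 2) (Fin 2) ℤ_[ℓ],
          ((h * g : GL (Fin 2) ℤ_[ℓ]) : Matrix (Fin 2) (Fin 2) ℤ_[ℓ])
            = 1 + ((ℓ : ℤ_[ℓ]) ^ (2 * e' + k + 2)) • C' :=
      fun k => approx_all k g hdet ⟨C₀, hC₀'⟩
    choose h hmem C' hC' using hseq
    -- the sequence h k * g tends to 1
    set r : ℕ → GL (Fin 2) ℤ_[ℓ] := fun k => h k * g with hrdef
    have hr1 : ∀ k, ∃ C : Matrix (Fin 2) (Fin 2) ℤ_[ℓ],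
        ((r k : GL (Fin 2) ℤ_[ℓ]) : Matrix (Fin 2) (Fin 2) ℤ_[ℓ])
          = 1 + ((ℓ : ℤ_[ℓ]) ^ ((2 * e' + 2) + k)) • C := by
      intro k
      refine ⟨C' k, ?_⟩
      rw [show (2 * e' + 2) + k = 2 * e' + k + 2 by omega]
      exact hC' k
    have hr2 : ∀ k, ∃ C : Matrix (Fin 2) (Fin 2) ℤ_[ℓ],
        (((r k)⁻¹ : GL (Fin 2) ℤ_[ℓ]) : Matrix (Fin 2) (Fin 2) ℤ_[ℓ])
          = 1 + ((ℓ : ℤ_[ℓ]) ^ ((2 * e' + 2) + k)) • C := by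
      intro k
      obtain ⟨C, hC⟩ := hr1 k
      exact inv_cong hC
    have hrt : Filter.Tendsto r Filter.atTop (nhds 1) := by
      apply tendsto_units_of
      · have := tendsto_val_one_of_level hr1
        simpa using this
      · have := tendsto_val_one_of_level hr2
        simpa using this
    -- hence (h k)⁻¹ tends to g
    have hinvt : Filter.Tendsto (fun k => (h k)⁻¹) Filter.atTop (nhds g) := by
      have heq : (fun k => (h k)⁻¹) = fun k => g * (r k)⁻¹ := by
        funext k
        rw [hrdef]
        group
      rw [heq]
      have : Filter.Tendsto (fun k => (r k)⁻¹) Filter.atTop (nhds 1) := by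
        have := hrt.inv
        simpa using this
      have hmul := this.const_mul g
      simpa using hmul
    -- conclude
    have : g ∈ closure ((⁅congruenceSubgroup ℓ (e' + 1), congruenceSubgroup ℓ (e' + 1)⁆ :
        Subgroup (GL (Fin 2) ℤ_[ℓ])) : Set (GL (Fin 2) ℤ_[ℓ])) := by
      apply mem_closure_of_tendsto hinvt
      filter_upwards with k
      exact inv_mem (hmem k)
    exact this
end

section
/- Let m ≥ 2 be an integer and let H be an open subgroup of GL₂(ℤ_m) (where ℤ_m = ∏_{ℓ|m} ℤ_ℓ). Then H has only finitely many closed maximal (proper) subgroups, and every closed maximal subgroup of H is open. -/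
open Matrix

instance factPrimeDvd {N : ℕ} (p : {p : ℕ // p.Prime ∧ p ∣ N}) : Fact (p.1.Prime) :=
  ⟨p.2.1⟩

/-- The ring `ℤ_m = ∏_{ℓ ∣ m} ℤ_ℓ`, the product of the `ℓ`-adic integers over the
primes `ℓ` dividing `m`. -/
abbrev Zadic (m : ℕ) : Type := (p : {p : ℕ // p.Prime ∧ p ∣ m}) → ℤ_[p.1]

namespace Stmt18

variable {m : ℕ}

abbrev Mat (m : ℕ) := Matrix (Fin 2) (Fin 2) (Zadic m)
abbrev GG (m : ℕ) := GL (Fin 2) (Zadic m)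

/-- entrywise divisibility by `m^n` -/
def dd (m n : ℕ) (A : Mat m) : Prop := ∀ i j, ((m : Zadic m))^n ∣ A i j

lemma dd_mono {n' n : ℕ} (h : n' ≤ n) {A : Mat m} (hA : dd m n A) : dd m n' A :=
  fun i j => dvd_trans (pow_dvd_pow _ h) (hA i j)

lemma dd_zero (n : ℕ) : dd m n (0 : Mat m) := fun i j => by simp [Matrix.zero_apply]

lemma dd_trivial {A : Mat m} : dd m 0 A := fun i j => by simp

lemma dd_add {n : ℕ} {A B : Mat m} (hA : dd m n A) (hB : dd m n B) : dd m n (A + B) :=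
  fun i j => by simpa using dvd_add (hA i j) (hB i j)

lemma dd_neg {n : ℕ} {A : Mat m} (hA : dd m n A) : dd m n (-A) :=
  fun i j => by simpa using (hA i j).neg_right

lemma dd_sub {n : ℕ} {A B : Mat m} (hA : dd m n A) (hB : dd m n B) : dd m n (A - B) := by
  rw [sub_eq_add_neg]; exact dd_add hA (dd_neg hB)

lemma dd_mul {a b : ℕ} {A B : Mat m} (hA : dd m a A) (hB : dd m b B) :
    dd m (a + b) (A * B) := by
  intro i j
  rw [Matrix.mul_apply]
  refine Finset.dvd_sum fun k _ => ?_
  rw [pow_add]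
  exact mul_dvd_mul (hA i k) (hB k j)

lemma dd_mul_left {n : ℕ} {A : Mat m} (B : Mat m) (hA : dd m n A) : dd m n (B * A) := by
  simpa using dd_mul (dd_trivial (A := B)) hA

lemma dd_mul_right {n : ℕ} {A : Mat m} (B : Mat m) (hA : dd m n A) : dd m n (A * B) := by
  simpa using dd_mul hA (dd_trivial (A := B))

lemma dd_nsmul {n : ℕ} (t : ℕ) {A : Mat m} (hA : dd m n A) : dd m n (t • A) := by
  intro i j
  rw [Matrix.smul_apply, nsmul_eq_mul]
  exact (hA i j).mul_left _

lemma dd_m_nsmul {n : ℕ} {A : Mat m} (hA : dd m n A) : dd m (n + 1) (m • A) := by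
  intro i j
  rw [Matrix.smul_apply, nsmul_eq_mul, pow_succ, mul_comm ((m : Zadic m) ^ n)]
  exact mul_dvd_mul dvd_rfl (hA i j)

end Stmt18
namespace Stmt18
variable {m : ℕ}

/-- the congruence subgroup `1 + m^n M₂` -/
def UU (m n : ℕ) : Subgroup (GG m) where
  carrier := {x | dd m n (x.val - 1)}
  one_mem' := by
    show dd m n ((1 : GG m).val - 1)
    simpa using dd_zero (m := m) n
  mul_mem' := by
    intro x y hx hy
    show dd m n ((x * y).val - 1)
    have h : (x * y).val - 1
        = (x.val - 1) * (y.val - 1) + ((x.val - 1) + (y.val - 1)) := by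
      rw [Units.val_mul]; noncomm_ring
    rw [h]
    exact dd_add (dd_mono (Nat.le_add_right n n) (dd_mul hx hy)) (dd_add hx hy)
  inv_mem' := by
    intro x hx
    show dd m n ((x⁻¹).val - 1)
    have h : (x⁻¹).val - 1 = (x⁻¹).val * (1 - x.val) := by
      have hinv : (x⁻¹).val * x.val = 1 := x.inv_mul
      rw [mul_sub, mul_one, hinv]
    rw [h]
    rw [← neg_sub x.val (1 : Mat m)]
    exact dd_mul_left _ (dd_neg hx)

lemma mem_UU {n : ℕ} {x : GG m} : x ∈ UU m n ↔ dd m n (x.val - 1) := Iff.rfl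

lemma UU_antitone {n' n : ℕ} (h : n' ≤ n) : UU m n ≤ UU m n' :=
  fun _x hx => dd_mono h hx

instance UU_normal (n : ℕ) : (UU m n).Normal := by
  constructor
  intro x hx g
  rw [mem_UU]
  have h : (g * x * g⁻¹).val - 1 = g.val * (x.val - 1) * (g⁻¹).val := by
    rw [Units.val_mul, Units.val_mul, mul_sub, sub_mul, mul_one]
    have : g.val * (g⁻¹).val = 1 := g.mul_inv
    rw [this]
  rw [h]
  exact dd_mul_right _ (dd_mul_left _ hx)

end Stmt18
namespace Stmt18
variable {m : ℕ}

lemma finite_primes (hm : m ≠ 0) : Finite {p : ℕ // p.Prime ∧ p ∣ m} := by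
  refine Finite.of_injective (fun p => (⟨p.1, Nat.lt_succ_of_le (Nat.le_of_dvd (Nat.pos_of_ne_zero hm) p.2.2)⟩ : Fin (m+1))) ?_
  intro p q h
  exact Subtype.ext (by simpa using congrArg Fin.val h)

lemma norm_m_lt_one (p : {p : ℕ // p.Prime ∧ p ∣ m}) : ‖((m : ℤ_[p.1]))‖ < 1 := by
  have : ((m : ℤ) : ℤ_[p.1]) = (m : ℤ_[p.1]) := by push_cast; rfl
  rw [← this, PadicInt.norm_int_lt_one_iff_dvd]
  exact_mod_cast p.2.2

lemma isUnit_one_add {p : ℕ} [Fact p.Prime] {z : ℤ_[p]} (hz : ‖z‖ < 1) : IsUnit (1 + z) := by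
  rw [PadicInt.isUnit_iff]
  refine le_antisymm (PadicInt.norm_le_one _) ?_
  by_contra hlt
  push_neg at hlt
  have h1 : (1 : ℝ) = ‖(1 + z) + (-z)‖ := by norm_num
  have h2 : ‖(1 + z) + (-z)‖ ≤ max ‖1 + z‖ ‖-z‖ := PadicInt.nonarchimedean _ _
  rw [norm_neg] at h2
  have : (1:ℝ) < 1 := lt_of_le_of_lt (h1 ▸ h2) (max_lt hlt hz)
  exact lt_irrefl _ this

lemma isUnit_one_add_m_mul (r : Zadic m) : IsUnit (1 + (m : Zadic m) * r) := by
  have h : ∀ p : {p : ℕ // p.Prime ∧ p ∣ m}, IsUnit ((1 : ℤ_[p.1]) + (m : ℤ_[p.1]) * r p) := by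
    intro p
    refine isUnit_one_add ?_
    calc ‖(m : ℤ_[p.1]) * r p‖ = ‖(m : ℤ_[p.1])‖ * ‖r p‖ := norm_mul _ _
      _ ≤ ‖(m : ℤ_[p.1])‖ * 1 := by
          exact mul_le_mul_of_nonneg_left (PadicInt.norm_le_one _) (norm_nonneg _)
      _ < 1 := by rw [mul_one]; exact norm_m_lt_one p
  choose u hu using fun p => h p
  refine ⟨⟨1 + (m : Zadic m) * r, fun p => (((u p)⁻¹ : ℤ_[p.1]ˣ) : ℤ_[p.1]), ?_, ?_⟩, rfl⟩
  · funext p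
    show ((1 : ℤ_[p.1]) + (m : ℤ_[p.1]) * r p) * (((u p)⁻¹ : ℤ_[p.1]ˣ) : ℤ_[p.1]) = 1
    rw [← hu p, Units.mul_inv]
  · funext p
    show (((u p)⁻¹ : ℤ_[p.1]ˣ) : ℤ_[p.1]) * ((1 : ℤ_[p.1]) + (m : ℤ_[p.1]) * r p) = 1
    rw [← hu p, Units.inv_mul]

end Stmt18
namespace Stmt18
variable {m : ℕ}

lemma isUnit_of_dd_one {X : Mat m} (h : dd m 1 (X - 1)) : IsUnit X := by
  rw [Matrix.isUnit_iff_isUnit_det]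
  have h' : ∀ i j, ∃ c, (X - 1) i j = (m : Zadic m)^1 * c := h
  choose c hc using h'
  have e : ∀ i j, X i j = (1 : Mat m) i j + (m : Zadic m) * c i j := by
    intro i j
    have := hc i j
    rw [Matrix.sub_apply, pow_one] at this
    linear_combination this
  have hdet : X.det = 1 + (m : Zadic m) *
      (c 0 0 + c 1 1 + (m : Zadic m) * (c 0 0 * c 1 1) - (m : Zadic m) * (c 0 1 * c 1 0)) := by
    rw [Matrix.det_fin_two, e 0 0, e 0 1, e 1 0, e 1 1]
    simp [Matrix.one_apply]
    ring
  rw [hdet]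
  exact isUnit_one_add_m_mul _

lemma dvd_iff_norm_le (hm : m ≠ 0) (p : {p : ℕ // p.Prime ∧ p ∣ m}) (n : ℕ) (z : ℤ_[p.1]) :
    (m : ℤ_[p.1])^n ∣ z ↔ ‖z‖ ≤ (p.1 : ℝ) ^ (-(n * m.factorization p.1) : ℤ) := by
  set a := m.factorization p.1 with ha
  set s := m / p.1 ^ a with hs
  have hfact : (p.1 : ℕ) ^ a * s = m := Nat.ordProj_mul_ordCompl_eq_self m p.1
  have hnds : ¬ (p.1 : ℕ) ∣ s := Nat.not_dvd_ordCompl p.2.1 hm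
  have hsu : IsUnit ((s : ℤ_[p.1])^n) := by
    refine IsUnit.pow n ?_
    rw [PadicInt.isUnit_iff]
    refine le_antisymm (PadicInt.norm_le_one _) ?_
    by_contra hlt
    push_neg at hlt
    have hcast : ((s : ℤ) : ℤ_[p.1]) = (s : ℤ_[p.1]) := by push_cast; rfl
    rw [← hcast, PadicInt.norm_int_lt_one_iff_dvd] at hlt
    exact hnds (by exact_mod_cast hlt)
  have hm' : (m : ℤ_[p.1])^n = (p.1 : ℤ_[p.1])^(n * a) * ((s : ℤ_[p.1])^n) := by
    have : ((p.1 ^ a * s : ℕ) : ℤ_[p.1]) = (m : ℤ_[p.1]) := by rw [hfact]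
    push_cast at this
    rw [← this, mul_pow, ← pow_mul, mul_comm a n]
  rw [hm', hsu.mul_right_dvd, ← Ideal.mem_span_singleton,
    ← PadicInt.norm_le_pow_iff_mem_span_pow]
  norm_cast

lemma isOpen_dvd_padic (hm : m ≠ 0) (p : {p : ℕ // p.Prime ∧ p ∣ m}) (n : ℕ) :
    IsOpen {z : ℤ_[p.1] | (m : ℤ_[p.1])^n ∣ z} := by
  have hset : {z : ℤ_[p.1] | (m : ℤ_[p.1])^n ∣ z}
      = {z : ℤ_[p.1] | ‖z‖ ≤ (p.1 : ℝ) ^ (-(n * m.factorization p.1) : ℤ)} :=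
    Set.ext fun z => dvd_iff_norm_le hm p n z
  rw [hset, Metric.isOpen_iff]
  intro z hz
  have hppos : (0 : ℝ) < (p.1 : ℝ) ^ (-(n * m.factorization p.1) : ℤ) :=
    zpow_pos (by exact_mod_cast p.2.1.pos) _
  refine ⟨_, hppos, ?_⟩
  intro w hw
  rw [Metric.mem_ball, dist_eq_norm] at hw
  show ‖w‖ ≤ _
  have : w = (w - z) + z := by ring
  rw [this]
  exact le_trans (PadicInt.nonarchimedean _ _) (max_le (le_of_lt hw) hz)

lemma dvd_component {n : ℕ} {r : Zadic m} (h : (m : Zadic m)^n ∣ r)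
    (p : {p : ℕ // p.Prime ∧ p ∣ m}) : (m : ℤ_[p.1])^n ∣ r p := by
  obtain ⟨c, hc⟩ := h
  exact ⟨c p, by rw [hc]; simp⟩

lemma dvd_of_components {n : ℕ} {r : Zadic m}
    (h : ∀ p : {p : ℕ // p.Prime ∧ p ∣ m}, (m : ℤ_[p.1])^n ∣ r p) : (m : Zadic m)^n ∣ r := by
  choose c hc using h
  exact ⟨c, by funext p; rw [hc p]; simp⟩

lemma isOpen_dvd_R (hm : m ≠ 0) (n : ℕ) : IsOpen {r : Zadic m | (m : Zadic m)^n ∣ r} := by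
  haveI := finite_primes (m := m) hm
  have hset : {r : Zadic m | (m : Zadic m)^n ∣ r}
      = ⋂ p : {p : ℕ // p.Prime ∧ p ∣ m},
          (fun r : Zadic m => r p) ⁻¹' {z : ℤ_[p.1] | (m : ℤ_[p.1])^n ∣ z} := by
    ext r
    simp only [Set.mem_setOf_eq, Set.mem_iInter, Set.mem_preimage]
    exact ⟨fun h p => dvd_component h p, dvd_of_components⟩
  rw [hset]
  exact isOpen_iInter_of_finite fun p => (isOpen_dvd_padic hm p n).preimage (continuous_apply p)

lemma isOpen_UU (hm : m ≠ 0) (n : ℕ) : IsOpen ((UU m n : Subgroup (GG m)) : Set (GG m)) := by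
  have h1 : ((UU m n : Subgroup (GG m)) : Set (GG m))
      = Units.val ⁻¹' {X : Mat m | dd m n (X - 1)} := rfl
  rw [h1]
  refine IsOpen.preimage Units.continuous_val ?_
  have h2 : {X : Mat m | dd m n (X - 1)}
      = ⋂ i, ⋂ j, (fun X : Mat m => (X - 1) i j) ⁻¹' {r : Zadic m | (m : Zadic m)^n ∣ r} := by
    ext X
    simp only [Set.mem_setOf_eq, Set.mem_iInter, Set.mem_preimage]
    rfl
  rw [h2]
  refine isOpen_iInter_of_finite fun i => isOpen_iInter_of_finite fun j => ?_
  exact (isOpen_dvd_R hm n).preimage ((continuous_id.sub continuous_const).matrix_elem i j)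

end Stmt18
namespace Stmt18
variable {m : ℕ}

lemma val_tendsto (v : ℕ → GG m) (hv : ∀ j, v j ∈ UU m j) :
    Filter.Tendsto (fun j => (v j).val) Filter.atTop (nhds (1 : Mat m)) := by
  apply tendsto_pi_nhds.mpr
  intro i
  apply tendsto_pi_nhds.mpr
  intro j'
  apply tendsto_pi_nhds.mpr
  intro p
  have hdecomp : (fun k => (v k).val i j' p)
      = fun k => (1 : Mat m) i j' p + ((v k).val - 1) i j' p := by
    funext k
    rw [Matrix.sub_apply, Pi.sub_apply]
    ring
  rw [hdecomp]
  have h0 : Filter.Tendsto (fun k => ((v k).val - 1) i j' p) Filter.atTop (nhds 0) := by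
    rw [tendsto_zero_iff_norm_tendsto_zero]
    apply squeeze_zero (fun k => norm_nonneg _) (g := fun k => ‖(m : ℤ_[p.1])‖ ^ k)
    · intro k
      obtain ⟨c, hc⟩ := dvd_component (hv k i j') p
      rw [hc, norm_mul]
      calc ‖(m : ℤ_[p.1]) ^ k‖ * ‖c‖ ≤ ‖(m : ℤ_[p.1]) ^ k‖ * 1 :=
            mul_le_mul_of_nonneg_left (PadicInt.norm_le_one _) (norm_nonneg _)
        _ = ‖(m : ℤ_[p.1]) ^ k‖ := mul_one _
        _ ≤ ‖(m : ℤ_[p.1])‖ ^ k := by rw [norm_pow]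
    · exact tendsto_pow_atTop_nhds_zero_of_lt_one (norm_nonneg _) (norm_m_lt_one p)
  have hfin := Filter.Tendsto.add (tendsto_const_nhds (x := (1 : Mat m) i j' p)) h0
  rw [add_zero] at hfin
  exact hfin

lemma tendsto_one_of_mem_UU (u : ℕ → GG m) (hu : ∀ j, u j ∈ UU m j) :
    Filter.Tendsto u Filter.atTop (nhds (1 : GG m)) := by
  rw [Units.isEmbedding_embedProduct.isInducing.tendsto_nhds_iff]
  have h1 : Filter.Tendsto (fun j => (u j).val) Filter.atTop (nhds (1 : Mat m)) :=
    val_tendsto u hu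
  have h2 : Filter.Tendsto (fun j => ((u j)⁻¹).val) Filter.atTop (nhds (1 : Mat m)) :=
    val_tendsto (fun j => (u j)⁻¹) (fun j => (UU m j).inv_mem (hu j))
  have h2' : Filter.Tendsto (fun j => MulOpposite.op ((u j).inv)) Filter.atTop
      (nhds (MulOpposite.op (1 : Mat m))) :=
    ((MulOpposite.continuous_op.tendsto _).comp h2)
  exact Filter.Tendsto.prodMk_nhds h1 h2'

end Stmt18
namespace Stmt18
variable {m : ℕ}

lemma compactSpace_GG : CompactSpace (GG m) := by
  haveI : CompactSpace (Mat m) :=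
    (inferInstance : CompactSpace (Fin 2 → Fin 2 → Zadic m))
  haveI : CompactSpace ((Mat m)ᵐᵒᵖ) := MulOpposite.opHomeomorph.compactSpace
  have hrange : Set.range (Units.embedProduct (Mat m)) =
      {x : Mat m × (Mat m)ᵐᵒᵖ | x.1 * x.2.unop = 1 ∧ x.2.unop * x.1 = 1} := by
    ext x
    constructor
    · rintro ⟨u, rfl⟩
      exact ⟨u.mul_inv, u.inv_mul⟩
    · rintro ⟨h1, h2⟩
      refine ⟨⟨x.1, x.2.unop, h1, h2⟩, ?_⟩
      show (x.1, MulOpposite.op x.2.unop) = x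
      rw [MulOpposite.op_unop]
  have hclosed : IsClosed (Set.range (Units.embedProduct (Mat m))) := by
    rw [hrange]
    have h1 : IsClosed {x : Mat m × (Mat m)ᵐᵒᵖ | x.1 * x.2.unop = 1} :=
      isClosed_eq (continuous_fst.mul (MulOpposite.continuous_unop.comp continuous_snd))
        continuous_const
    have h2 : IsClosed {x : Mat m × (Mat m)ᵐᵒᵖ | x.2.unop * x.1 = 1} :=
      isClosed_eq ((MulOpposite.continuous_unop.comp continuous_snd).mul continuous_fst)
        continuous_const
    exact (Set.setOf_and ▸ h1.inter h2 :)
  rw [← isCompact_univ_iff, Units.isEmbedding_embedProduct.isCompact_iff, Set.image_univ]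
  exact hclosed.isCompact

end Stmt18
namespace Stmt18
variable {m : ℕ}

/-- Binomial-type expansion: `(1+c)^t = 1 + t•c + E` with `E` divisible by `m^(n+2)`. -/
lemma pow_expansion {n : ℕ} (hn : 2 ≤ n) {c : Mat m} (hc : dd m n c) (t : ℕ) :
    ∃ E : Mat m, (1 + c) ^ t = 1 + t • c + E ∧ dd m (n + 2) E := by
  induction t with
  | zero =>
      exact ⟨0, by simp, dd_zero _⟩
  | succ t ih =>
      obtain ⟨E, hE, hEd⟩ := ih
      refine ⟨E + (t • c) * c + E * c, ?_, ?_⟩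
      · rw [pow_succ, hE, succ_nsmul]
        noncomm_ring
      · refine dd_add (dd_add hEd ?_) (dd_mul_right _ hEd)
        have h2n : dd m (n + n) ((t • c) * c) := dd_mul (dd_nsmul t hc) hc
        exact dd_mono (by omega) h2n

lemma pow_mem_UU_succ {n : ℕ} (hn : 1 ≤ n) {v : GG m} (hv : v ∈ UU m (n + 1)) :
    v ^ m ∈ UU m (n + 2) := by
  have hc : dd m (n + 1) (v.val - 1) := hv
  obtain ⟨E, hE, hEd⟩ := pow_expansion (m := m) (by omega) hc m
  rw [mem_UU]
  have hval : (v ^ m).val = v.val ^ m := Units.val_pow_eq_pow_val v m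
  have hv1 : (1 : Mat m) + (v.val - 1) = v.val := by noncomm_ring
  have : (v ^ m).val - 1 = m • (v.val - 1) + E := by
    rw [hval, ← hv1, hE]
    noncomm_ring
  rw [this]
  refine dd_add ?_ (dd_mono (by omega) hEd)
  exact dd_m_nsmul hc

/-- conjugation moves elements of `U_{n+1}` by something in `m^(2n+1)` when conjugating
by an element of `U_n`. -/
lemma conj_bound {n : ℕ} {g v : GG m} (hg : g ∈ UU m n) (hv : v ∈ UU m (n + 1)) :
    dd m (2 * n + 1) (g.val * v.val * (g⁻¹).val - v.val) := by
  have key : g.val * v.val * (g⁻¹).val - v.val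
      = ((g.val - 1) * (v.val - 1) - (v.val - 1) * (g.val - 1)) * (g⁻¹).val := by
    have hgi : g.val * (g⁻¹).val = 1 := g.mul_inv
    have expand : (g.val - 1) * (v.val - 1) - (v.val - 1) * (g.val - 1)
        = g.val * v.val - v.val * g.val := by noncomm_ring
    rw [expand, sub_mul, mul_assoc, mul_assoc, hgi, mul_one]
  rw [key]
  refine dd_mul_right _ ?_
  have h1 : dd m (n + (n + 1)) ((g.val - 1) * (v.val - 1)) := dd_mul hg hv
  have h2 : dd m ((n + 1) + n) ((v.val - 1) * (g.val - 1)) := dd_mul hv hg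
  refine dd_sub (dd_mono (by omega) h1) (dd_mono (by omega) h2)

/-- key commutator-collection lemma: `(k*v)^t = k^t * c` with `c` close to `v^t`. -/
lemma collect {n : ℕ} {k v : GG m} (hk : k ∈ UU m n) (hv : v ∈ UU m (n + 1)) (t : ℕ) :
    ∃ c : GG m, (k * v) ^ t = k ^ t * c ∧ c ∈ UU m (n + 1) ∧
      dd m (2 * n + 1) (c.val - v.val ^ t) := by
  induction t with
  | zero =>
      refine ⟨1, by simp, (UU m (n + 1)).one_mem, ?_⟩
      simp only [pow_zero, Units.val_one, sub_self]
      exact dd_zero _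
  | succ t ih =>
      obtain ⟨c, hc, hcU, hcd⟩ := ih
      refine ⟨(k⁻¹ * c * k) * v, ?_, ?_, ?_⟩
      · rw [pow_succ, hc, pow_succ]
        group
      · exact (UU m (n + 1)).mul_mem
          ((UU_normal (n + 1)).conj_mem' c hcU k) hv
      · have hval : ((k⁻¹ * c * k) * v).val = (k⁻¹.val * c.val * k.val) * v.val := by
          rw [Units.val_mul, Units.val_mul, Units.val_mul]
        have hsplit : ((k⁻¹ * c * k) * v).val - v.val ^ (t + 1)
            = ((k⁻¹.val * c.val * k.val - c.val) + (c.val - v.val ^ t)) * v.val := by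
          rw [hval, pow_succ]
          noncomm_ring
        rw [hsplit]
        refine dd_mul_right _ (dd_add ?_ hcd)
        have hki : k⁻¹ ∈ UU m n := (UU m n).inv_mem hk
        have := conj_bound hki hcU
        have hkk : ((k⁻¹)⁻¹).val = k.val := by rw [inv_inv]
        rw [hkk] at this
        exact this

end Stmt18
namespace Stmt18
variable {m : ℕ}

/-- decomposition property: every element of `U_n` is `k * u` with `k ∈ K`, `u ∈ U_{n+1}`. -/
def SC (m : ℕ) (K : Subgroup (GG m)) (n : ℕ) : Prop :=
  ∀ v ∈ UU m n, ∃ k ∈ K, ∃ u ∈ UU m (n + 1), v = k * u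

lemma SC_step {K : Subgroup (GG m)} {n : ℕ} (hn : 2 ≤ n) (hSC : SC m K n) :
    SC m K (n + 1) := by
  intro v hv
  have h' : ∀ i j, ∃ b, (v.val - 1) i j = (m : Zadic m) ^ (n + 1) * b := hv
  choose B hB using h'
  set W : Mat m := 1 + (m : Zadic m) ^ n • (Matrix.of B) with hW
  have hWsub : W - 1 = (m : Zadic m) ^ n • (Matrix.of B) := by
    rw [hW]; exact add_sub_cancel_left _ _
  have hWd : dd m n (W - 1) := by
    intro i j
    rw [hWsub, Matrix.smul_apply, Matrix.of_apply, smul_eq_mul]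
    exact Dvd.intro (B i j) rfl
  have hWu : IsUnit W := isUnit_of_dd_one (dd_mono (by omega) hWd)
  set w : GG m := hWu.unit with hwdef
  have hwval : w.val = W := hWu.unit_spec
  have hwU : w ∈ UU m n := by rw [mem_UU, hwval]; exact hWd
  obtain ⟨k₁, hk₁K, u₁, hu₁, hwe⟩ := hSC w hwU
  have hk₁U : k₁ ∈ UU m n := by
    have hk1 : k₁ = w * u₁⁻¹ := by rw [hwe]; group
    rw [hk1]
    exact mul_mem hwU ((UU m n).inv_mem (UU_antitone (by omega) hu₁))
  obtain ⟨c, hcol, hcU, hcd⟩ := collect hk₁U hu₁ m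
  have hvm : u₁ ^ m ∈ UU m (n + 2) := pow_mem_UU_succ (by omega) hu₁
  have hcU2 : c ∈ UU m (n + 2) := by
    rw [mem_UU]
    have hsplit : c.val - 1 = (c.val - u₁.val ^ m) + ((u₁ ^ m).val - 1) := by
      rw [Units.val_pow_eq_pow_val]; noncomm_ring
    rw [hsplit]
    exact dd_add (dd_mono (by omega) hcd) hvm
  obtain ⟨E, hE, hEd⟩ := pow_expansion hn hWd m
  have hWm : w.val ^ m = 1 + m • (W - 1) + E := by
    rw [hwval, ← hE]
    congr 1
    noncomm_ring
  have hpow : dd m (n + 2) (w.val ^ m - v.val) := by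
    intro i j
    have hent : (m • (W - 1)) i j = (m : Zadic m) ^ (n + 1) * B i j := by
      rw [Matrix.smul_apply, hWsub, Matrix.smul_apply, Matrix.of_apply, smul_eq_mul,
        nsmul_eq_mul, pow_succ]
      ring
    have hvent : v.val i j = (1 : Mat m) i j + (m : Zadic m) ^ (n + 1) * B i j := by
      have := hB i j
      rw [Matrix.sub_apply] at this
      linear_combination this
    have hexp : (w.val ^ m - v.val) i j = E i j := by
      rw [hWm, Matrix.sub_apply, Matrix.add_apply, Matrix.add_apply, hent, hvent]
      ring
    rw [hexp]
    exact hEd i j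
  have hz : (w ^ m)⁻¹ * v ∈ UU m (n + 2) := by
    rw [mem_UU]
    have h1 : ((w ^ m)⁻¹ * v).val - 1 = ((w ^ m)⁻¹).val * (v.val - (w ^ m).val) := by
      rw [Units.val_mul, mul_sub]
      have h2 : ((w ^ m)⁻¹).val * (w ^ m).val = 1 := (w ^ m).inv_mul
      rw [h2]
    rw [h1]
    refine dd_mul_left _ ?_
    have h3 : v.val - (w ^ m).val = -(w.val ^ m - v.val) := by
      rw [Units.val_pow_eq_pow_val, neg_sub]
    rw [h3]
    exact dd_neg hpow
  refine ⟨k₁ ^ m, pow_mem hk₁K m, c * ((w ^ m)⁻¹ * v), mul_mem hcU2 hz, ?_⟩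
  have hwm : w ^ m = k₁ ^ m * c := by rw [hwe]; exact hcol
  calc v = (w ^ m) * ((w ^ m)⁻¹ * v) := by group
    _ = k₁ ^ m * (c * ((w ^ m)⁻¹ * v)) := by rw [hwm]; group

end Stmt18
namespace Stmt18
variable {m : ℕ}

lemma SC_all {K : Subgroup (GG m)} {e : ℕ} (he : 2 ≤ e) (hbase : SC m K (e + 1)) :
    ∀ j, SC m K (e + 1 + j) := by
  intro j
  induction j with
  | zero => exact hbase
  | succ j ih => exact SC_step (n := e + 1 + j) (by omega) ih

lemma decomp_all {K : Subgroup (GG m)} {e : ℕ} (he : 2 ≤ e) (hbase : SC m K (e + 1))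
    {v : GG m} (hv : v ∈ UU m (e + 1)) :
    ∀ j, ∃ k ∈ K, ∃ u ∈ UU m (e + 1 + j), v = k * u := by
  intro j
  induction j with
  | zero => exact ⟨1, one_mem K, v, hv, (one_mul v).symm⟩
  | succ j ih =>
      obtain ⟨k, hk, u, hu, heq⟩ := ih
      obtain ⟨k', hk', u', hu', heq'⟩ := SC_all he hbase j u hu
      exact ⟨k * k', mul_mem hk hk', u', hu', by rw [heq, heq', mul_assoc]⟩

lemma mem_of_approx {K : Subgroup (GG m)} (hK : IsClosed (K : Set (GG m))) {x : GG m}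
    (hx : ∀ j, ∃ k ∈ K, ∃ u ∈ UU m j, x = k * u) : x ∈ K := by
  choose k hk u hu heq using hx
  have hinv : ∀ j, (u j)⁻¹ ∈ UU m j := fun j => (UU m j).inv_mem (hu j)
  have hlim := tendsto_one_of_mem_UU (fun j => (u j)⁻¹) hinv
  have hmul : Filter.Tendsto (fun j => x * (u j)⁻¹) Filter.atTop (nhds (x * 1)) :=
    Filter.Tendsto.const_mul x hlim
  rw [mul_one] at hmul
  have hkx : (fun j => k j) = fun j => x * (u j)⁻¹ := by
    funext j
    rw [heq j]
    group
  rw [← hkx] at hmul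
  exact hK.mem_of_tendsto hmul (Filter.Eventually.of_forall hk)

end Stmt18


open Stmt18 Pointwise in
set_option synthInstance.maxHeartbeats 1000000 in
set_option maxHeartbeats 1000000 in
/-- for `m ≥ 2`, an open subgroup `H` of `GL₂(ℤ_m)` has only finitely
many closed maximal (proper) subgroups, and every such subgroup is open. -/
theorem open_subgroup_GL2_finitely_many_maximal_closed (m : ℕ) (hm : 2 ≤ m)
    (H : Subgroup (GL (Fin 2) (Zadic m)))
    (hopen : IsOpen (H : Set (GL (Fin 2) (Zadic m)))) :
    {K : Subgroup (GL (Fin 2) (Zadic m)) |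
        K ≤ H ∧ K ≠ H ∧ IsClosed (K : Set (GL (Fin 2) (Zadic m))) ∧
          ∀ K' : Subgroup (GL (Fin 2) (Zadic m)),
            IsClosed (K' : Set (GL (Fin 2) (Zadic m))) → K ≤ K' → K' ≤ H →
              K' = K ∨ K' = H}.Finite ∧
      ∀ K ∈ {K : Subgroup (GL (Fin 2) (Zadic m)) |
        K ≤ H ∧ K ≠ H ∧ IsClosed (K : Set (GL (Fin 2) (Zadic m))) ∧
          ∀ K' : Subgroup (GL (Fin 2) (Zadic m)),
            IsClosed (K' : Set (GL (Fin 2) (Zadic m))) → K ≤ K' → K' ≤ H →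
              K' = K ∨ K' = H},
        IsOpen (K : Set (GL (Fin 2) (Zadic m))) := by
  classical
  have hm0 : m ≠ 0 := by omega
  -- find a congruence subgroup inside H
  obtain ⟨e', he'⟩ : ∃ e', ((UU m e' : Subgroup (GG m)) : Set (GG m)) ⊆ (H : Set (GG m)) := by
    by_contra hcon
    push_neg at hcon
    have hch : ∀ n, ∃ x : GG m, x ∈ UU m n ∧ x ∉ H := by
      intro n
      obtain ⟨x, hx1, hx2⟩ := Set.not_subset.mp (hcon n)
      exact ⟨x, hx1, hx2⟩
    choose x hx1 hx2 using hch
    have hlim := tendsto_one_of_mem_UU x hx1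
    have hev : ∀ᶠ j in Filter.atTop, x j ∈ (H : Set (GG m)) :=
      hlim (hopen.mem_nhds H.one_mem)
    obtain ⟨n, hn⟩ := hev.exists
    exact hx2 n hn
  set e := e' + 2 with he_def
  have he2 : 2 ≤ e := by omega
  have heU : UU m e ≤ H := fun x hx => he' (UU_antitone (by omega) hx)
  haveI : CompactSpace (GG m) := compactSpace_GG
  have hNopen : IsOpen ((UU m (e + 2) : Subgroup (GG m)) : Set (GG m)) := isOpen_UU hm0 _
  -- every maximal closed subgroup contains `UU m (e+2)`
  have key : ∀ K : Subgroup (GG m),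
      K ≤ H → K ≠ H → IsClosed (K : Set (GG m)) →
      (∀ K' : Subgroup (GG m), IsClosed (K' : Set (GG m)) → K ≤ K' → K' ≤ H →
        K' = K ∨ K' = H) →
      UU m (e + 2) ≤ K := by
    intro K hKH hKne hKcl hKmax
    have hK'open : IsOpen ((K ⊔ UU m (e + 2) : Subgroup (GG m)) : Set (GG m)) :=
      Subgroup.isOpen_mono le_sup_right hNopen
    have hK'cl : IsClosed ((K ⊔ UU m (e + 2) : Subgroup (GG m)) : Set (GG m)) :=
      Subgroup.isClosed_of_isOpen _ hK'open
    have hK'H : K ⊔ UU m (e + 2) ≤ H :=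
      sup_le hKH (le_trans (UU_antitone (by omega)) heU)
    rcases hKmax (K ⊔ UU m (e + 2)) hK'cl le_sup_left hK'H with hKK | hKH'
    · exact le_trans le_sup_right (le_of_eq hKK)
    · -- the join is all of H : run the Frattini-type argument
      have hbase : SC m K (e + 1) := by
        intro v hv
        have hvH : v ∈ H := heU (UU_antitone (by omega) hv)
        rw [← hKH'] at hvH
        have hmem : (v : GG m) ∈ (K : Set (GG m)) * ((UU m (e + 2) : Subgroup (GG m)) : Set (GG m)) := by
          rw [← Subgroup.mul_normal]
          exact hvH
        obtain ⟨k, hk, u, hu, heq⟩ := hmem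
        exact ⟨k, hk, u, hu, heq.symm⟩
      have hUK : UU m (e + 1) ≤ K := by
        intro v hv
        refine mem_of_approx hKcl ?_
        intro j
        obtain ⟨k, hk, u, hu, heq⟩ := decomp_all (by omega) hbase hv j
        exact ⟨k, hk, u, UU_antitone (by omega) hu, heq⟩
      exact le_trans (UU_antitone (by omega)) hUK
  constructor
  · -- finiteness
    haveI : (UU m (e + 2) : Subgroup (GG m)).Normal := UU_normal _
    haveI hfin : Finite (GG m ⧸ (UU m (e + 2) : Subgroup (GG m))) :=
      Subgroup.quotient_finite_of_isOpen _ hNopen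
    apply Set.Finite.of_finite_image
      (f := fun K : Subgroup (GG m) =>
        ((QuotientGroup.mk '' (K : Set (GG m))) : Set (GG m ⧸ (UU m (e + 2) : Subgroup (GG m)))))
    · exact Set.toFinite _
    · have hsub : ∀ K₁ K₂ : Subgroup (GG m), UU m (e + 2) ≤ K₂ →
          ((QuotientGroup.mk '' (K₁ : Set (GG m))) :
            Set (GG m ⧸ (UU m (e + 2) : Subgroup (GG m)))) ⊆ QuotientGroup.mk '' (K₂ : Set (GG m)) →
          K₁ ≤ K₂ := by
        intro K₁ K₂ hN hsub x hx
        obtain ⟨y, hy, hyx⟩ := hsub ⟨x, hx, rfl⟩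
        have hyN : y⁻¹ * x ∈ UU m (e + 2) := (QuotientGroup.eq).mp hyx
        have hxe : x = y * (y⁻¹ * x) := by group
        rw [hxe]
        exact K₂.mul_mem hy (hN hyN)
      rintro K₁ ⟨h₁H, h₁ne, h₁cl, h₁max⟩ K₂ ⟨h₂H, h₂ne, h₂cl, h₂max⟩ himg
      have h12 : ((QuotientGroup.mk '' (K₁ : Set (GG m))) :
          Set (GG m ⧸ (UU m (e + 2) : Subgroup (GG m)))) = QuotientGroup.mk '' (K₂ : Set (GG m)) := himg
      exact le_antisymm
        (hsub K₁ K₂ (key K₂ h₂H h₂ne h₂cl h₂max) (le_of_eq h12))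
        (hsub K₂ K₁ (key K₁ h₁H h₁ne h₁cl h₁max) (le_of_eq h12.symm))
  · -- openness
    rintro K ⟨hKH, hKne, hKcl, hKmax⟩
    exact Subgroup.isOpen_mono (key K hKH hKne hKcl hKmax) hNopen
end
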